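/- arXiv:2511.20212 — 3 statements merged into one kernel-verified Lean document; each statement's English description precedes it below -/
import Mathlib

section
/- Let S' be any subset of V(G') with cut_{G'}(S') = MAXCUT(G') (a maximum cut of G'), and define S = { u ∈ V(G) : L_u ⊆ S' }. Then cut_G(S) = MAXCUT(G); that is, the projection (S, V(G) \ S) is a maximum cut of the original graph G. -/
/-!
STATEMENT 8: projecting a maximum cut S′ of G′ to S = { u : L_u ⊆ S′ } yields a
maximum cut of the original graph G.
-/
noncomputable section

namespace QAOA

/-- Vertex type of the graph `G'` built from a graph on vertex type `V` of size `n0`: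
gadget vertices `L u i` (`i < n0+1`), `R u i` (`i < 10 n0`), frame vertices
`X i`, `Y i` (`i < 100 n0²`), and the controller `W`. -/
inductive GPV (V : Type) (n0 : ℕ) : Type where
  | L : V → Fin (n0 + 1) → GPV V n0
  | R : V → Fin (10 * n0) → GPV V n0
  | X : Fin (100 * n0 * n0) → GPV V n0
  | Y : Fin (100 * n0 * n0) → GPV V n0
  | W : GPV V n0
  deriving DecidableEq, Fintype

/-- Base relation (one orientation per edge) describing the edges of `G'`. -/
def gpRel {V : Type} [DecidableEq V] (n0 : ℕ) (G : SimpleGraph V) [DecidableRel G.Adj] :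
    GPV V n0 → GPV V n0 → Bool
  | .L u _, .R v _ => u == v
  | .L u i, .L v j => decide (G.Adj u v) && ((i : ℕ) == (j : ℕ))
  | .X _, .Y _ => true
  | .X i, .L _ _ => (i : ℕ) == 0
  | .X i, .R _ _ => (i : ℕ) == 0
  | .Y i, .L _ _ => (i : ℕ) == 0
  | .Y i, .R _ _ => (i : ℕ) == 0
  | .W, .X i => (i : ℕ) == 0
  | .W, .Y i => (i : ℕ) == 0
  | .W, .L _ i => (i : ℕ) == 0
  | _, _ => false

/-- The graph `G'` obtained from `G` by the four-step construction. -/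
def Gp {V : Type} [DecidableEq V] (n0 : ℕ) (G : SimpleGraph V) [DecidableRel G.Adj] :
    SimpleGraph (GPV V n0) :=
  SimpleGraph.fromRel (fun a b => gpRel n0 G a b = true)

instance {V : Type} [DecidableEq V] (n0 : ℕ) (G : SimpleGraph V) [DecidableRel G.Adj] :
    DecidableRel (Gp n0 G).Adj := fun a b =>
  decidable_of_iff _ (SimpleGraph.fromRel_adj (fun a b => gpRel n0 G a b = true) a b).symm

/-- The special frame vertex `x₀`. -/
def xzero (V : Type) (n0 : ℕ) (h : 0 < n0) : GPV V n0 :=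
  GPV.X ⟨0, Nat.mul_pos (Nat.mul_pos (by norm_num) h) h⟩

/-- The special frame vertex `y₀`. -/
def yzero (V : Type) (n0 : ℕ) (h : 0 < n0) : GPV V n0 :=
  GPV.Y ⟨0, Nat.mul_pos (Nat.mul_pos (by norm_num) h) h⟩

/-- `cutSet H S` is the number of edges of `H` with exactly one endpoint in `S`. -/
def cutSet {W : Type} [Fintype W] [DecidableEq W] (H : SimpleGraph W) [DecidableRel H.Adj]
    (S : Finset W) : ℕ :=
  (Finset.univ.filter (fun pr : W × W => H.Adj pr.1 pr.2 ∧ pr.1 ∈ S ∧ pr.2 ∉ S)).card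

/-- `maxCut H` is the maximum of `cutSet H S` over all vertex subsets `S`. -/
def maxCut {W : Type} [Fintype W] [DecidableEq W] (H : SimpleGraph W) [DecidableRel H.Adj] : ℕ :=
  (Finset.univ : Finset (Finset W)).sup (fun S => cutSet H S)

end QAOA

set_option linter.unusedSectionVars false
set_option maxHeartbeats 2000000
namespace QAOA
open Finset

section Aux
variable {V : Type} [Fintype V] [DecidableEq V] (n0 : ℕ) (G : SimpleGraph V) [DecidableRel G.Adj]

lemma cutSet_eq_sum {Wt : Type} [Fintype Wt] [DecidableEq Wt] (H : SimpleGraph Wt)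
    [DecidableRel H.Adj] (S : Finset Wt) :
    cutSet H S = ∑ a : Wt, ∑ b : Wt, if H.Adj a b ∧ a ∈ S ∧ b ∉ S then 1 else 0 := by
  rw [cutSet, Finset.card_filter, ← Finset.univ_product_univ, Finset.sum_product]

def gpvEquiv : (V × Fin (n0+1)) ⊕ (V × Fin (10*n0)) ⊕ (Fin (100*n0*n0)) ⊕ (Fin (100*n0*n0)) ⊕ Unit ≃ GPV V n0 where
  toFun x := match x with
    | .inl (u,i) => .L u i
    | .inr (.inl (u,j)) => .R u j
    | .inr (.inr (.inl k)) => .X k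
    | .inr (.inr (.inr (.inl k))) => .Y k
    | .inr (.inr (.inr (.inr _))) => .W
  invFun a := match a with
    | .L u i => .inl (u,i)
    | .R u j => .inr (.inl (u,j))
    | .X k => .inr (.inr (.inl k))
    | .Y k => .inr (.inr (.inr (.inl k)))
    | .W => .inr (.inr (.inr (.inr ())))
  left_inv x := by rcases x with ⟨u,i⟩|⟨⟨u,j⟩|(k|(k|⟨⟩))⟩ <;> rfl
  right_inv a := by cases a <;> rfl

lemma sum_gpv (f : GPV V n0 → ℕ) :
    ∑ a, f a = ((∑ u, ∑ i, f (.L u i)) + (∑ u, ∑ j, f (.R u j)) + (∑ k, f (.X k)) +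
      (∑ k, f (.Y k))) + f .W := by
  rw [← Equiv.sum_comp (gpvEquiv n0) f]
  rw [Fintype.sum_sum_type, Fintype.sum_sum_type, Fintype.sum_sum_type, Fintype.sum_sum_type]
  simp [Fintype.sum_prod_type, gpvEquiv]
  ring


lemma adj_LL (u v : V) (i j : Fin (n0+1)) :
    (Gp n0 G).Adj (.L u i) (.L v j) ↔ G.Adj u v ∧ i = j := by
  rw [Gp, SimpleGraph.fromRel_adj]
  simp only [gpRel, Bool.and_eq_true, decide_eq_true_eq, beq_iff_eq, Fin.val_eq_val, ne_eq]
  constructor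
  · rintro ⟨hne, (⟨h,rfl⟩|⟨h,rfl⟩)⟩
    · exact ⟨h, rfl⟩
    · exact ⟨h.symm, rfl⟩
  · rintro ⟨h, rfl⟩
    exact ⟨by simp [G.ne_of_adj h], Or.inl ⟨h, rfl⟩⟩

lemma adj_LR (u v : V) (i : Fin (n0+1)) (j : Fin (10*n0)) :
    (Gp n0 G).Adj (.L u i) (.R v j) ↔ u = v := by
  rw [Gp, SimpleGraph.fromRel_adj]
  simp [gpRel]

lemma adj_LX (u : V) (i : Fin (n0+1)) (k : Fin (100*n0*n0)) :
    (Gp n0 G).Adj (.L u i) (.X k) ↔ (k : ℕ) = 0 := by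
  rw [Gp, SimpleGraph.fromRel_adj]
  simp [gpRel]

lemma adj_LY (u : V) (i : Fin (n0+1)) (k : Fin (100*n0*n0)) :
    (Gp n0 G).Adj (.L u i) (.Y k) ↔ (k : ℕ) = 0 := by
  rw [Gp, SimpleGraph.fromRel_adj]
  simp [gpRel]

lemma adj_LW (u : V) (i : Fin (n0+1)) :
    (Gp n0 G).Adj (.L u i) .W ↔ (i : ℕ) = 0 := by
  rw [Gp, SimpleGraph.fromRel_adj]
  simp [gpRel]

lemma adj_RX (u : V) (j : Fin (10*n0)) (k : Fin (100*n0*n0)) :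
    (Gp n0 G).Adj (.R u j) (.X k) ↔ (k : ℕ) = 0 := by
  rw [Gp, SimpleGraph.fromRel_adj]
  simp [gpRel]

lemma adj_RY (u : V) (j : Fin (10*n0)) (k : Fin (100*n0*n0)) :
    (Gp n0 G).Adj (.R u j) (.Y k) ↔ (k : ℕ) = 0 := by
  rw [Gp, SimpleGraph.fromRel_adj]
  simp [gpRel]

lemma adj_XY (k l : Fin (100*n0*n0)) :
    (Gp n0 G).Adj (.X k) (.Y l) := by
  rw [Gp, SimpleGraph.fromRel_adj]
  simp [gpRel]

lemma adj_XW (k : Fin (100*n0*n0)) :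
    (Gp n0 G).Adj (.X k) .W ↔ (k : ℕ) = 0 := by
  rw [Gp, SimpleGraph.fromRel_adj]
  simp [gpRel]

lemma adj_YW (k : Fin (100*n0*n0)) :
    (Gp n0 G).Adj (.Y k) .W ↔ (k : ℕ) = 0 := by
  rw [Gp, SimpleGraph.fromRel_adj]
  simp [gpRel]

lemma adj_RR (u v : V) (i j : Fin (10*n0)) : ¬ (Gp n0 G).Adj (.R u i) (.R v j) := by
  rw [Gp, SimpleGraph.fromRel_adj]
  simp [gpRel]

lemma adj_XX (k l : Fin (100*n0*n0)) : ¬ (Gp n0 G).Adj (.X k) (.X l) := by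
  rw [Gp, SimpleGraph.fromRel_adj]
  simp [gpRel]

lemma adj_YY (k l : Fin (100*n0*n0)) : ¬ (Gp n0 G).Adj (.Y k) (.Y l) := by
  rw [Gp, SimpleGraph.fromRel_adj]
  simp [gpRel]

lemma adj_RW (u : V) (j : Fin (10*n0)) : ¬ (Gp n0 G).Adj (.R u j) .W := by
  rw [Gp, SimpleGraph.fromRel_adj]
  simp [gpRel]

lemma adj_WW : ¬ (Gp n0 G).Adj (.W : GPV V n0) .W := (Gp n0 G).irrefl


variable {n0 G}

/-- helper: sum of indicator equals filter card times constant -/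
lemma sum_ind_const {α : Type} [Fintype α] (P : α → Prop) [DecidablePred P] (c : ℕ) :
    ∑ x : α, (if P x then c else 0) = (univ.filter P).card * c := by
  rw [← Finset.sum_filter, Finset.sum_const, smul_eq_mul]

lemma sum_ind {α : Type} [Fintype α] (P : α → Prop) [DecidablePred P] :
    ∑ x : α, (if P x then 1 else 0) = (univ.filter P).card := by
  rw [sum_ind_const, mul_one]

variable (n0) in
/-- membership sets / counts -/
def ASet (S : Finset (GPV V n0)) (u : V) : Finset (Fin (n0+1)) :=
  univ.filter (fun i => GPV.L u i ∈ S)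

variable (n0) in
def ain (S : Finset (GPV V n0)) (u : V) : ℕ := (ASet n0 S u).card
variable (n0) in
def aout (S : Finset (GPV V n0)) (u : V) : ℕ :=
  (univ.filter (fun i : Fin (n0+1) => GPV.L u i ∉ S)).card
variable (n0) in
def binR (S : Finset (GPV V n0)) (u : V) : ℕ :=
  (univ.filter (fun j : Fin (10*n0) => GPV.R u j ∈ S)).card
variable (n0) in
def boutR (S : Finset (GPV V n0)) (u : V) : ℕ :=
  (univ.filter (fun j : Fin (10*n0) => GPV.R u j ∉ S)).card
variable (n0) in
def xinN (S : Finset (GPV V n0)) : ℕ :=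
  (univ.filter (fun k : Fin (100*n0*n0) => GPV.X k ∈ S)).card
variable (n0) in
def xoutN (S : Finset (GPV V n0)) : ℕ :=
  (univ.filter (fun k : Fin (100*n0*n0) => GPV.X k ∉ S)).card
variable (n0) in
def yinN (S : Finset (GPV V n0)) : ℕ :=
  (univ.filter (fun k : Fin (100*n0*n0) => GPV.Y k ∈ S)).card
variable (n0) in
def youtN (S : Finset (GPV V n0)) : ℕ :=
  (univ.filter (fun k : Fin (100*n0*n0) => GPV.Y k ∉ S)).card

lemma ain_add_aout (S : Finset (GPV V n0)) (u : V) : ain n0 S u + aout n0 S u = n0 + 1 := by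
  rw [ain, ASet, aout, Finset.card_filter_add_card_filter_not]
  simp

lemma bin_add_bout (S : Finset (GPV V n0)) (u : V) : binR n0 S u + boutR n0 S u = 10*n0 := by
  rw [binR, boutR, Finset.card_filter_add_card_filter_not]
  simp

lemma xin_add_xout (S : Finset (GPV V n0)) : xinN n0 S + xoutN n0 S = 100*n0*n0 := by
  rw [xinN, xoutN, Finset.card_filter_add_card_filter_not]
  simp

lemma yin_add_yout (S : Finset (GPV V n0)) : yinN n0 S + youtN n0 S = 100*n0*n0 := by
  rw [yinN, youtN, Finset.card_filter_add_card_filter_not]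
  simp


lemma adj_RL (u v : V) (j : Fin (10*n0)) (i : Fin (n0+1)) :
    (Gp n0 G).Adj (.R u j) (.L v i) ↔ v = u := by
  rw [SimpleGraph.adj_comm, adj_LR]
lemma adj_XL (k : Fin (100*n0*n0)) (u : V) (i : Fin (n0+1)) :
    (Gp n0 G).Adj (.X k) (.L u i) ↔ (k : ℕ) = 0 := by
  rw [SimpleGraph.adj_comm, adj_LX]
lemma adj_YL (k : Fin (100*n0*n0)) (u : V) (i : Fin (n0+1)) :
    (Gp n0 G).Adj (.Y k) (.L u i) ↔ (k : ℕ) = 0 := by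
  rw [SimpleGraph.adj_comm, adj_LY]
lemma adj_WL (u : V) (i : Fin (n0+1)) :
    (Gp n0 G).Adj .W (.L u i) ↔ (i : ℕ) = 0 := by
  rw [SimpleGraph.adj_comm, adj_LW]
lemma adj_XR (k : Fin (100*n0*n0)) (u : V) (j : Fin (10*n0)) :
    (Gp n0 G).Adj (.X k) (.R u j) ↔ (k : ℕ) = 0 := by
  rw [SimpleGraph.adj_comm, adj_RX]
lemma adj_YR (k : Fin (100*n0*n0)) (u : V) (j : Fin (10*n0)) :
    (Gp n0 G).Adj (.Y k) (.R u j) ↔ (k : ℕ) = 0 := by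
  rw [SimpleGraph.adj_comm, adj_RY]
lemma adj_YX (k l : Fin (100*n0*n0)) : (Gp n0 G).Adj (.Y k) (.X l) := ((Gp n0 G).adj_symm (adj_XY n0 G l k))
lemma adj_WX (k : Fin (100*n0*n0)) :
    (Gp n0 G).Adj .W (.X k) ↔ (k : ℕ) = 0 := by
  rw [SimpleGraph.adj_comm, adj_XW]
lemma adj_WY (k : Fin (100*n0*n0)) :
    (Gp n0 G).Adj .W (.Y k) ↔ (k : ℕ) = 0 := by
  rw [SimpleGraph.adj_comm, adj_YW]
lemma adj_WR (u : V) (j : Fin (10*n0)) : ¬ (Gp n0 G).Adj .W (.R u j) := by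
  rw [SimpleGraph.adj_comm]; exact adj_RW n0 G u j
lemma adj_LRv (u v : V) (i : Fin (n0+1)) (j : Fin (10*n0)) :
    (Gp n0 G).Adj (.L u i) (.R v j) ↔ v = u := by rw [adj_LR]; exact eq_comm

set_option maxHeartbeats 1000000 in
lemma master (hn0 : 0 < n0) (S : Finset (GPV V n0)) :
    cutSet (Gp n0 G) S =
      (∑ u, ∑ i : Fin (n0+1), ∑ v,
          if G.Adj u v then if GPV.L u i ∈ S then if GPV.L v i ∉ S then (1:ℕ) else 0 else 0
          else 0)
      + ((∑ u, ain n0 S u * boutR n0 S u) + (∑ u, binR n0 S u * aout n0 S u))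
      + (xinN n0 S * youtN n0 S + yinN n0 S * xoutN n0 S)
      + (if xzero V n0 hn0 ∈ S then (∑ u, aout n0 S u) + (∑ u, boutR n0 S u)
          else (∑ u, ain n0 S u) + (∑ u, binR n0 S u))
      + (if yzero V n0 hn0 ∈ S then (∑ u, aout n0 S u) + (∑ u, boutR n0 S u)
          else (∑ u, ain n0 S u) + (∑ u, binR n0 S u))
      + ((if xzero V n0 hn0 ∈ S then if (GPV.W : GPV V n0) ∉ S then 1 else 0 else 0)
          + (if (GPV.W : GPV V n0) ∈ S then if xzero V n0 hn0 ∉ S then 1 else 0 else 0))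
      + ((if yzero V n0 hn0 ∈ S then if (GPV.W : GPV V n0) ∉ S then 1 else 0 else 0)
          + (if (GPV.W : GPV V n0) ∈ S then if yzero V n0 hn0 ∉ S then 1 else 0 else 0))
      + ((if (GPV.W : GPV V n0) ∉ S then
            (univ.filter (fun u : V => GPV.L u ⟨0, Nat.succ_pos n0⟩ ∈ S)).card else 0)
          + (if (GPV.W : GPV V n0) ∈ S then
            (univ.filter (fun u : V => GPV.L u ⟨0, Nat.succ_pos n0⟩ ∉ S)).card else 0)) := by
  have hM : 0 < 100*n0*n0 := Nat.mul_pos (Nat.mul_pos (by norm_num) hn0) hn0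
  have hk0 : ∀ k : Fin (100*n0*n0), ((k:ℕ) = 0) = ((⟨0,hM⟩ : Fin (100*n0*n0)) = k) := by
    intro k; rw [eq_comm (b := k), Fin.ext_iff]
  have hi0 : ∀ i : Fin (n0+1), ((i:ℕ) = 0) = ((⟨0,Nat.succ_pos n0⟩ : Fin (n0+1)) = i) := by
    intro i; rw [eq_comm (b := i), Fin.ext_iff]
  rw [cutSet_eq_sum, sum_gpv]
  simp only [sum_gpv]
  simp only [adj_LL, adj_LRv, adj_LX, adj_LY, adj_LW, adj_RL, adj_RX, adj_RY, adj_XY, adj_XW,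
    adj_YW, adj_RR, adj_XX, adj_YY, adj_RW, adj_WW, adj_XL, adj_YL, adj_WL, adj_XR, adj_YR,
    adj_YX, adj_WX, adj_WY, adj_WR, hk0, hi0, true_and, false_and, if_false, if_true,
    Finset.sum_const_zero, ite_and, Finset.sum_ite_irrel, Finset.sum_ite_eq, Finset.mem_univ,
    if_true, add_zero, zero_add]
  simp only [Finset.sum_add_distrib, Finset.sum_ite_eq, Finset.sum_ite_eq', Finset.mem_univ,
    if_true, sum_ind_const, sum_ind]
  simp only [ain, aout, binR, boutR, xinN, xoutN, yinN, youtN, ASet, xzero, yzero, mul_one]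
  by_cases hx : GPV.X (⟨0, hM⟩ : Fin (100*n0*n0)) ∈ S <;>
    by_cases hy : GPV.Y (⟨0, hM⟩ : Fin (100*n0*n0)) ∈ S <;>
      by_cases hw : (GPV.W : GPV V n0) ∈ S <;>
        simp only [hx, hy, hw, if_true, if_false, not_true, not_false_iff, mul_one, mul_zero,
          Finset.sum_const_zero, add_zero, zero_add, ite_true, ite_false] <;>
        ring

variable (n0) in
/-- canonical lift of a cut `T` of `G` to `G'`. -/
def canonP (T : Finset V) : GPV V n0 → Bool
  | .L u _ => decide (u ∈ T)
  | .R u _ => !(decide (u ∈ T))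
  | .X _ => true
  | .Y _ => false
  | .W => false

variable (n0) in
def canonS (T : Finset V) : Finset (GPV V n0) := univ.filter (fun a => canonP n0 T a = true)

@[simp] lemma mem_canon_L (T : Finset V) (u : V) (i : Fin (n0+1)) :
    GPV.L u i ∈ canonS n0 T ↔ u ∈ T := by simp only [canonS, Finset.mem_filter, Finset.mem_univ, true_and]; simp [canonP]
@[simp] lemma mem_canon_R (T : Finset V) (u : V) (j : Fin (10*n0)) :
    GPV.R u j ∈ canonS n0 T ↔ u ∉ T := by simp only [canonS, Finset.mem_filter, Finset.mem_univ, true_and]; simp [canonP]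
@[simp] lemma mem_canon_X (T : Finset V) (k : Fin (100*n0*n0)) :
    GPV.X k ∈ canonS n0 T := by simp only [canonS, Finset.mem_filter, Finset.mem_univ, true_and]; simp [canonP]
@[simp] lemma mem_canon_Y (T : Finset V) (k : Fin (100*n0*n0)) :
    GPV.Y k ∉ canonS n0 T := by simp only [canonS, Finset.mem_filter, Finset.mem_univ, true_and]; simp [canonP]
@[simp] lemma mem_canon_W (T : Finset V) :
    (GPV.W : GPV V n0) ∉ canonS n0 T := by simp only [canonS, Finset.mem_filter, Finset.mem_univ, true_and]; simp [canonP]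

lemma canon_val (hn0 : 0 < n0) (hV : Fintype.card V = n0) (T : Finset V) :
    cutSet (Gp n0 G) (canonS n0 T) =
      (n0+1) * cutSet G T + (100*n0*n0)*(100*n0*n0) + n0*((n0+1)*(10*n0))
        + n0*(11*n0+1) + 1 + T.card := by
  rw [master (G := G) hn0]
  rw [cutSet_eq_sum G T]
  simp only [ain, aout, binR, boutR, xinN, xoutN, yinN, youtN, ASet, xzero, yzero,
    mem_canon_L, mem_canon_R, mem_canon_X, mem_canon_Y, mem_canon_W, not_true, not_false_iff,
    not_not]
  simp only [Finset.filter_const, apply_ite Finset.card, Finset.card_univ, Finset.card_empty,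
    Fintype.card_fin, if_true, if_false, ite_true, ite_false, Finset.filter_not]
  have hmul : ∀ (p : Prop) (inst : Decidable p) (a b : ℕ),
      ((if p then a else 0) * (if p then b else 0)) = if p then a*b else 0 := by
    intro p inst a b; split <;> simp
  simp only [hmul]
  have hpair : ∀ c : ℕ, ((∑ x : V, if x ∈ T then c else 0) + (∑ x : V, if x ∉ T then c else 0))
      = n0 * c := by
    intro c
    rw [← Finset.sum_add_distrib]
    have : ∀ x : V, ((if x ∈ T then c else 0) + (if x ∉ T then c else 0)) = c := by
      intro x; by_cases hx : x ∈ T <;> simp [hx]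
    rw [Finset.sum_congr rfl fun x _ => this x, Finset.sum_const, Finset.card_univ, hV,
      smul_eq_mul]
  have hsync : (∑ x : V, ∑ _x1 : Fin (n0+1), ∑ x2 : V,
        if G.Adj x x2 then if x ∈ T then if x2 ∉ T then (1:ℕ) else 0 else 0 else 0)
      = (n0+1) * ∑ a : V, ∑ b : V, if G.Adj a b ∧ a ∈ T ∧ b ∉ T then 1 else 0 := by
    rw [Finset.mul_sum]
    refine Finset.sum_congr rfl fun x _ => ?_
    rw [Finset.sum_const, Finset.card_univ, Fintype.card_fin, smul_eq_mul]
    congr 1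
    refine Finset.sum_congr rfl fun x2 _ => ?_
    simp only [ite_and]
  have hT : (Finset.filter (fun u => u ∈ T) Finset.univ).card = T.card := by
    congr 1; ext u; simp
  rw [hsync, hT]
  have h1 := hpair (n0+1)
  have h2 := hpair (10*n0)
  have h3 := hpair ((n0+1)*(10*n0))
  have h4 := hpair ((10*n0)*(n0+1))
  ring_nf
  ring_nf at h1 h2 h3 h4
  linarith


variable (n0 G) in
/-- sync part of the cut -/
def coreL (S : Finset (GPV V n0)) : ℕ :=
  ∑ u, ∑ i : Fin (n0+1), ∑ v,
    (if G.Adj u v then if GPV.L u i ∈ S then if GPV.L v i ∉ S then (1:ℕ) else 0 else 0 else 0)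

variable (n0) in
/-- gadget part of the cut -/
def coreG (S : Finset (GPV V n0)) : ℕ :=
  ∑ u, (ain n0 S u * boutR n0 S u + binR n0 S u * aout n0 S u)

variable (n0) in
/-- w-to-L part of the cut -/
def coreW (S : Finset (GPV V n0)) : ℕ :=
  ∑ u, (if (GPV.W : GPV V n0) ∈ S then (if GPV.L u ⟨0, Nat.succ_pos n0⟩ ∉ S then 1 else 0)
    else (if GPV.L u ⟨0, Nat.succ_pos n0⟩ ∈ S then 1 else 0))

variable (n0 G) in
def core (S : Finset (GPV V n0)) : ℕ := coreL n0 G S + coreG n0 S + coreW n0 S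

lemma coreW_le (hV : Fintype.card V = n0) (S : Finset (GPV V n0)) : coreW n0 S ≤ n0 := by
  calc coreW n0 S ≤ ∑ _u : V, 1 := Finset.sum_le_sum (fun u _ => by split <;> split <;> simp)
  _ = n0 := by simp [hV]

lemma cut_form (hn0 : 0 < n0) (hV : Fintype.card V = n0) (Sm : Finset (GPV V n0))
    (hor : ((∀ k, GPV.X k ∈ Sm) ∧ (∀ k, GPV.Y k ∉ Sm)) ∨
           ((∀ k, GPV.X k ∉ Sm) ∧ (∀ k, GPV.Y k ∈ Sm))) :
    cutSet (Gp n0 G) Sm = core n0 G Sm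
      + ((100*n0*n0)*(100*n0*n0) + n0*(11*n0+1) + 1) := by
  have hM : 0 < 100*n0*n0 := Nat.mul_pos (Nat.mul_pos (by norm_num) hn0) hn0
  have hpair : ∀ c : ℕ,
      ((∑ u : V, (if c = 0 then 0 else 0)) = 0) := by intro c; simp
  rw [master (G := G) hn0, core, coreL, coreG, coreW]
  have hA : (∑ u, ain n0 Sm u) + (∑ u, aout n0 Sm u) = n0*(n0+1) := by
    rw [← Finset.sum_add_distrib]
    rw [Finset.sum_congr rfl (fun u _ => ain_add_aout Sm u), Finset.sum_const,
      Finset.card_univ, hV, smul_eq_mul]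
  have hB : (∑ u, binR n0 Sm u) + (∑ u, boutR n0 Sm u) = n0*(10*n0) := by
    rw [← Finset.sum_add_distrib]
    rw [Finset.sum_congr rfl (fun u _ => bin_add_bout Sm u), Finset.sum_const,
      Finset.card_univ, hV, smul_eq_mul]
  have hwl : ((if (GPV.W : GPV V n0) ∉ Sm then
        (univ.filter (fun u : V => GPV.L u ⟨0, Nat.succ_pos n0⟩ ∈ Sm)).card else 0)
      + (if (GPV.W : GPV V n0) ∈ Sm then
        (univ.filter (fun u : V => GPV.L u ⟨0, Nat.succ_pos n0⟩ ∉ Sm)).card else 0))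
      = ∑ u : V, (if (GPV.W : GPV V n0) ∈ Sm then
          (if GPV.L u ⟨0, Nat.succ_pos n0⟩ ∉ Sm then 1 else 0)
        else (if GPV.L u ⟨0, Nat.succ_pos n0⟩ ∈ Sm then 1 else 0)) := by
    by_cases hw : (GPV.W : GPV V n0) ∈ Sm <;>
      simp only [hw, if_true, if_false, not_true, not_false_iff, ite_true, ite_false,
        add_zero, zero_add] <;> exact (sum_ind _).symm
  rcases hor with ⟨hx, hy⟩ | ⟨hx, hy⟩
  · have hxin : xinN n0 Sm = 100*n0*n0 := by
      rw [xinN]; rw [Finset.filter_true_of_mem (fun k _ => hx k)]; simp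
    have hxout : xoutN n0 Sm = 0 := by
      rw [xoutN, Finset.card_eq_zero, Finset.filter_eq_empty_iff]; intro k _; simp [hx k]
    have hyin : yinN n0 Sm = 0 := by
      rw [yinN, Finset.card_eq_zero, Finset.filter_eq_empty_iff]; intro k _; simp [hy k]
    have hyout : youtN n0 Sm = 100*n0*n0 := by
      rw [youtN]; rw [Finset.filter_true_of_mem (fun k _ => by simp [hy k])]; simp
    have hx0 : xzero V n0 hn0 ∈ Sm := hx _
    have hy0 : yzero V n0 hn0 ∉ Sm := hy _
    rw [hxin, hxout, hyin, hyout, if_pos hx0, if_neg (by simpa using hy0), if_neg hy0, hwl]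
    by_cases hw : (GPV.W : GPV V n0) ∈ Sm <;>
      simp only [hw, hx0, hy0, if_true, if_false, not_true, not_false_iff, ite_true, ite_false,
        not_not] <;>
    · simp only [Finset.sum_add_distrib]
      ring_nf
      ring_nf at hA hB
      linarith
  · have hxin : xinN n0 Sm = 0 := by
      rw [xinN, Finset.card_eq_zero, Finset.filter_eq_empty_iff]; intro k _; simp [hx k]
    have hxout : xoutN n0 Sm = 100*n0*n0 := by
      rw [xoutN]; rw [Finset.filter_true_of_mem (fun k _ => by simp [hx k])]; simp
    have hyin : yinN n0 Sm = 100*n0*n0 := by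
      rw [yinN]; rw [Finset.filter_true_of_mem (fun k _ => hy k)]; simp
    have hyout : youtN n0 Sm = 0 := by
      rw [youtN, Finset.card_eq_zero, Finset.filter_eq_empty_iff]; intro k _; simp [hy k]
    have hx0 : xzero V n0 hn0 ∉ Sm := hx _
    have hy0 : yzero V n0 hn0 ∈ Sm := hy _
    rw [hxin, hxout, hyin, hyout, if_neg hx0, if_pos hy0, hwl]
    by_cases hw : (GPV.W : GPV V n0) ∈ Sm <;>
      simp only [hw, hx0, hy0, if_true, if_false, not_true, not_false_iff, ite_true, ite_false,
        not_not] <;>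
    · simp only [Finset.sum_add_distrib]
      ring_nf
      ring_nf at hA hB
      linarith

variable (n0) in
def sxP (S' : Finset (GPV V n0)) : GPV V n0 → Bool
  | .X _ => true
  | .Y _ => false
  | .L u i => decide (GPV.L u i ∈ S')
  | .R u j => decide (GPV.R u j ∈ S')
  | .W => decide ((GPV.W : GPV V n0) ∈ S')

variable (n0) in
def sxS (S' : Finset (GPV V n0)) : Finset (GPV V n0) := univ.filter (fun a => sxP n0 S' a = true)

@[simp] lemma mem_sx_L (S' : Finset (GPV V n0)) (u : V) (i : Fin (n0+1)) :
    GPV.L u i ∈ sxS n0 S' ↔ GPV.L u i ∈ S' := by simp only [sxS, Finset.mem_filter, Finset.mem_univ, true_and]; simp [sxP]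
@[simp] lemma mem_sx_R (S' : Finset (GPV V n0)) (u : V) (j : Fin (10*n0)) :
    GPV.R u j ∈ sxS n0 S' ↔ GPV.R u j ∈ S' := by simp only [sxS, Finset.mem_filter, Finset.mem_univ, true_and]; simp [sxP]
@[simp] lemma mem_sx_W (S' : Finset (GPV V n0)) :
    (GPV.W : GPV V n0) ∈ sxS n0 S' ↔ (GPV.W : GPV V n0) ∈ S' := by simp only [sxS, Finset.mem_filter, Finset.mem_univ, true_and]; simp [sxP]
@[simp] lemma mem_sx_X (S' : Finset (GPV V n0)) (k : Fin (100*n0*n0)) :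
    GPV.X k ∈ sxS n0 S' := by simp only [sxS, Finset.mem_filter, Finset.mem_univ, true_and]; simp [sxP]
@[simp] lemma mem_sx_Y (S' : Finset (GPV V n0)) (k : Fin (100*n0*n0)) :
    GPV.Y k ∉ sxS n0 S' := by simp only [sxS, Finset.mem_filter, Finset.mem_univ, true_and]; simp [sxP]

lemma core_sx (S' : Finset (GPV V n0)) : core n0 G (sxS n0 S') = core n0 G S' := by
  rw [core, core, coreL, coreL, coreG, coreG, coreW, coreW]
  congr 1
  · congr 1
    · refine Finset.sum_congr rfl fun u _ => Finset.sum_congr rfl fun i _ =>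
        Finset.sum_congr rfl fun v _ => ?_
      simp only [mem_sx_L]
    · refine Finset.sum_congr rfl fun u _ => ?_
      simp only [ain, aout, binR, boutR, ASet]
      congr 2 <;> · congr 1; ext; simp
  · refine Finset.sum_congr rfl fun u _ => ?_
    simp only [mem_sx_L, mem_sx_W]

lemma xy_structure (hn0 : 0 < n0) (hV : Fintype.card V = n0) (S' : Finset (GPV V n0))
    (hmax : ∀ T', cutSet (Gp n0 G) T' ≤ cutSet (Gp n0 G) S') :
    ((∀ k, GPV.X k ∈ S') ∧ (∀ k, GPV.Y k ∉ S')) ∨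
      ((∀ k, GPV.X k ∉ S') ∧ (∀ k, GPV.Y k ∈ S')) := by
  have hM : 0 < 100*n0*n0 := Nat.mul_pos (Nat.mul_pos (by norm_num) hn0) hn0
  have h := hmax (sxS n0 S')
  rw [cut_form hn0 hV _ (Or.inl ⟨fun k => mem_sx_X S' k, fun k => mem_sx_Y S' k⟩),
    core_sx, master (G := G) hn0 S'] at h
  -- abbreviations
  have hA : (∑ u, ain n0 S' u) + (∑ u, aout n0 S' u) = n0*(n0+1) := by
    rw [← Finset.sum_add_distrib]
    rw [Finset.sum_congr rfl (fun u _ => ain_add_aout S' u), Finset.sum_const,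
      Finset.card_univ, hV, smul_eq_mul]
  have hB : (∑ u, binR n0 S' u) + (∑ u, boutR n0 S' u) = n0*(10*n0) := by
    rw [← Finset.sum_add_distrib]
    rw [Finset.sum_congr rfl (fun u _ => bin_add_bout S' u), Finset.sum_const,
      Finset.card_univ, hV, smul_eq_mul]
  have hwl : ((if (GPV.W : GPV V n0) ∉ S' then
        (univ.filter (fun u : V => GPV.L u ⟨0, Nat.succ_pos n0⟩ ∈ S')).card else 0)
      + (if (GPV.W : GPV V n0) ∈ S' then
        (univ.filter (fun u : V => GPV.L u ⟨0, Nat.succ_pos n0⟩ ∉ S')).card else 0))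
      = coreW n0 S' := by
    rw [coreW]
    by_cases hw : (GPV.W : GPV V n0) ∈ S' <;>
      simp only [hw, if_true, if_false, not_true, not_false_iff, ite_true, ite_false,
        add_zero, zero_add] <;> exact (sum_ind _).symm
  -- reduce the inequality to the X/Y part
  rw [hwl, core, coreL, coreG] at h
  simp only [Finset.sum_add_distrib] at h
  have key : (100*n0*n0)*(100*n0*n0)
      ≤ (xinN n0 S' * youtN n0 S' + yinN n0 S' * xoutN n0 S') + (n0*(11*n0+1) + 1) := by
    by_cases hx0 : xzero V n0 hn0 ∈ S' <;> by_cases hy0 : yzero V n0 hn0 ∈ S' <;>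
      by_cases hw : (GPV.W : GPV V n0) ∈ S' <;>
      simp only [hx0, hy0, hw, if_true, if_false, not_true, not_false_iff, ite_true,
        ite_false] at h <;>
    · ring_nf at h hA hB ⊢
      linarith [Nat.zero_le (∑ u : V, ain n0 S' u), Nat.zero_le (∑ u : V, binR n0 S' u),
        Nat.zero_le (∑ u : V, aout n0 S' u), Nat.zero_le (∑ u : V, boutR n0 S' u),
        Nat.zero_le (xinN n0 S' * youtN n0 S'), Nat.zero_le (yinN n0 S' * xoutN n0 S'),
        Nat.zero_le (coreW n0 S'),
        Nat.zero_le (∑ x : V, ain n0 S' x * boutR n0 S' x),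
        Nat.zero_le (∑ x : V, binR n0 S' x * aout n0 S' x)]
  -- purity of the X/Y sides
  have hxy : xinN n0 S' + xoutN n0 S' = 100*n0*n0 := xin_add_xout S'
  have hyy : yinN n0 S' + youtN n0 S' = 100*n0*n0 := yin_add_yout S'
  have hdef : xinN n0 S' * yinN n0 S' + xoutN n0 S' * youtN n0 S' ≤ n0*(11*n0+1) + 1 := by
    have hexp : (xinN n0 S' + xoutN n0 S') * (yinN n0 S' + youtN n0 S')
        = xinN n0 S' * youtN n0 S' + yinN n0 S' * xoutN n0 S'
          + (xinN n0 S' * yinN n0 S' + xoutN n0 S' * youtN n0 S') := by ring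
    rw [hxy, hyy] at hexp
    linarith
  have hsmall : n0*(11*n0+1) + 1 < 100*n0*n0 := by
    have h1 : 1 ≤ n0 := hn0
    have h2 : 1*1 ≤ n0*n0 := Nat.mul_le_mul h1 h1
    have h3 : n0*1 ≤ n0*n0 := Nat.mul_le_mul_left n0 h1
    ring_nf
    ring_nf at h2 h3
    linarith
  have hcases : (xinN n0 S' = 100*n0*n0 ∧ yinN n0 S' = 0) ∨
      (xinN n0 S' = 0 ∧ yinN n0 S' = 100*n0*n0) := by
    rcases Nat.eq_zero_or_pos (xinN n0 S') with h0 | h1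
    · right
      refine ⟨h0, ?_⟩
      have hxo : xoutN n0 S' = 100*n0*n0 := by omega
      have : xoutN n0 S' * youtN n0 S' ≤ n0*(11*n0+1) + 1 := by omega
      rw [hxo] at this
      have : youtN n0 S' = 0 := by nlinarith
      omega
    · rcases Nat.eq_zero_or_pos (xoutN n0 S') with h0' | h1'
      · left
        have hxi : xinN n0 S' = 100*n0*n0 := by omega
        refine ⟨hxi, ?_⟩
        have : xinN n0 S' * yinN n0 S' ≤ n0*(11*n0+1) + 1 := by omega
        rw [hxi] at this
        nlinarith
      · exfalso
        have : yinN n0 S' + youtN n0 S' ≤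
            xinN n0 S' * yinN n0 S' + xoutN n0 S' * youtN n0 S' := by
          have h1'' : yinN n0 S' ≤ xinN n0 S' * yinN n0 S' := Nat.le_mul_of_pos_left _ h1
          have h2'' : youtN n0 S' ≤ xoutN n0 S' * youtN n0 S' := Nat.le_mul_of_pos_left _ h1'
          omega
        omega
  rcases hcases with ⟨hxi, hyi⟩ | ⟨hxi, hyi⟩
  · left
    constructor
    · intro k
      have := Finset.eq_univ_of_card _ (by rw [xinN] at hxi; rw [hxi]; simp)
      have hk : k ∈ Finset.univ.filter (fun k : Fin (100*n0*n0) => GPV.X k ∈ S') := by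
        rw [this]; exact Finset.mem_univ k
      exact (Finset.mem_filter.1 hk).2
    · intro k
      have h0 : Finset.univ.filter (fun k : Fin (100*n0*n0) => GPV.Y k ∈ S') = ∅ :=
        Finset.card_eq_zero.1 hyi
      intro hk
      have : k ∈ Finset.univ.filter (fun k : Fin (100*n0*n0) => GPV.Y k ∈ S') := by
        simp [hk]
      rw [h0] at this
      exact absurd this (Finset.notMem_empty k)
  · right
    constructor
    · intro k
      have h0 : Finset.univ.filter (fun k : Fin (100*n0*n0) => GPV.X k ∈ S') = ∅ :=
        Finset.card_eq_zero.1 hxi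
      intro hk
      have : k ∈ Finset.univ.filter (fun k : Fin (100*n0*n0) => GPV.X k ∈ S') := by
        simp [hk]
      rw [h0] at this
      exact absurd this (Finset.notMem_empty k)
    · intro k
      have := Finset.eq_univ_of_card _ (by rw [yinN] at hyi; rw [hyi]; simp)
      have hk : k ∈ Finset.univ.filter (fun k : Fin (100*n0*n0) => GPV.Y k ∈ S') := by
        rw [this]; exact Finset.mem_univ k
      exact (Finset.mem_filter.1 hk).2

variable (n0 G) in
def tA (S : Finset (GPV V n0)) (u : V) (i : Fin (n0+1)) (v : V) : ℕ :=
  if G.Adj u v then if GPV.L u i ∈ S then if GPV.L v i ∉ S then 1 else 0 else 0 else 0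

lemma coreL_eq (S : Finset (GPV V n0)) :
    coreL n0 G S = ∑ u, ∑ i : Fin (n0+1), ∑ v, tA n0 G S u i v := rfl

lemma coreL_split (S : Finset (GPV V n0)) (u0 : V) :
    coreL n0 G S = (∑ i : Fin (n0+1), ∑ v, tA n0 G S u0 i v)
      + (∑ u ∈ univ.erase u0, ∑ i : Fin (n0+1), tA n0 G S u i u0)
      + (∑ u ∈ univ.erase u0, ∑ i : Fin (n0+1), ∑ v ∈ univ.erase u0, tA n0 G S u i v) := by
  rw [coreL_eq, ← Finset.add_sum_erase _ _ (Finset.mem_univ u0), add_assoc]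
  congr 1
  rw [← Finset.sum_add_distrib]
  refine Finset.sum_congr rfl fun u _ => ?_
  rw [← Finset.sum_add_distrib]
  refine Finset.sum_congr rfl fun i _ => ?_
  rw [← Finset.add_sum_erase _ _ (Finset.mem_univ u0)]

lemma coreG_split (S : Finset (GPV V n0)) (u0 : V) :
    coreG n0 S = (ain n0 S u0 * boutR n0 S u0 + binR n0 S u0 * aout n0 S u0)
      + ∑ u ∈ univ.erase u0, (ain n0 S u * boutR n0 S u + binR n0 S u * aout n0 S u) := by
  rw [coreG, ← Finset.add_sum_erase _ _ (Finset.mem_univ u0)]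

lemma coreW_split (S : Finset (GPV V n0)) (u0 : V) :
    coreW n0 S = (if (GPV.W : GPV V n0) ∈ S then
        (if GPV.L u0 ⟨0, Nat.succ_pos n0⟩ ∉ S then 1 else 0)
        else (if GPV.L u0 ⟨0, Nat.succ_pos n0⟩ ∈ S then 1 else 0))
      + ∑ u ∈ univ.erase u0, (if (GPV.W : GPV V n0) ∈ S then
        (if GPV.L u ⟨0, Nat.succ_pos n0⟩ ∉ S then 1 else 0)
        else (if GPV.L u ⟨0, Nat.succ_pos n0⟩ ∈ S then 1 else 0)) := by
  rw [coreW, ← Finset.add_sum_erase _ _ (Finset.mem_univ u0)]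

variable (n0) in
def slP (S' : Finset (GPV V n0)) (u0 : V) (c : Bool) : GPV V n0 → Bool
  | .L u i => if u = u0 then c else decide (GPV.L u i ∈ S')
  | .R u j => if u = u0 then !c else decide (GPV.R u j ∈ S')
  | .X k => decide (GPV.X k ∈ S')
  | .Y k => decide (GPV.Y k ∈ S')
  | .W => decide ((GPV.W : GPV V n0) ∈ S')

variable (n0) in
def slS (S' : Finset (GPV V n0)) (u0 : V) (c : Bool) : Finset (GPV V n0) :=
  univ.filter (fun a => slP n0 S' u0 c a = true)

@[simp] lemma mem_sl_L_self (S' : Finset (GPV V n0)) (u0 : V) (c : Bool) (i : Fin (n0+1)) :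
    GPV.L u0 i ∈ slS n0 S' u0 c ↔ c = true := by simp only [slS, Finset.mem_filter, Finset.mem_univ, true_and]; simp [slP]
lemma mem_sl_L_ne (S' : Finset (GPV V n0)) {u u0 : V} (h : u ≠ u0) (c : Bool) (i : Fin (n0+1)) :
    GPV.L u i ∈ slS n0 S' u0 c ↔ GPV.L u i ∈ S' := by simp only [slS, Finset.mem_filter, Finset.mem_univ, true_and]; simp [slP, h]
@[simp] lemma mem_sl_R_self (S' : Finset (GPV V n0)) (u0 : V) (c : Bool) (j : Fin (10*n0)) :
    GPV.R u0 j ∈ slS n0 S' u0 c ↔ (!c) = true := by simp only [slS, Finset.mem_filter, Finset.mem_univ, true_and]; simp [slP]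
lemma mem_sl_R_ne (S' : Finset (GPV V n0)) {u u0 : V} (h : u ≠ u0) (c : Bool) (j : Fin (10*n0)) :
    GPV.R u j ∈ slS n0 S' u0 c ↔ GPV.R u j ∈ S' := by simp only [slS, Finset.mem_filter, Finset.mem_univ, true_and]; simp [slP, h]
@[simp] lemma mem_sl_X (S' : Finset (GPV V n0)) (u0 : V) (c : Bool) (k : Fin (100*n0*n0)) :
    GPV.X k ∈ slS n0 S' u0 c ↔ GPV.X k ∈ S' := by simp only [slS, Finset.mem_filter, Finset.mem_univ, true_and]; simp [slP]
@[simp] lemma mem_sl_Y (S' : Finset (GPV V n0)) (u0 : V) (c : Bool) (k : Fin (100*n0*n0)) :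
    GPV.Y k ∈ slS n0 S' u0 c ↔ GPV.Y k ∈ S' := by simp only [slS, Finset.mem_filter, Finset.mem_univ, true_and]; simp [slP]
@[simp] lemma mem_sl_W (S' : Finset (GPV V n0)) (u0 : V) (c : Bool) :
    (GPV.W : GPV V n0) ∈ slS n0 S' u0 c ↔ (GPV.W : GPV V n0) ∈ S' := by simp only [slS, Finset.mem_filter, Finset.mem_univ, true_and]; simp [slP]

variable (n0) in
def srP (S' : Finset (GPV V n0)) (u0 : V) (c : Bool) : GPV V n0 → Bool
  | .L u i => decide (GPV.L u i ∈ S')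
  | .R u j => if u = u0 then c else decide (GPV.R u j ∈ S')
  | .X k => decide (GPV.X k ∈ S')
  | .Y k => decide (GPV.Y k ∈ S')
  | .W => decide ((GPV.W : GPV V n0) ∈ S')

variable (n0) in
def srS (S' : Finset (GPV V n0)) (u0 : V) (c : Bool) : Finset (GPV V n0) :=
  univ.filter (fun a => srP n0 S' u0 c a = true)

@[simp] lemma mem_sr_L (S' : Finset (GPV V n0)) (u0 : V) (c : Bool) (u : V) (i : Fin (n0+1)) :
    GPV.L u i ∈ srS n0 S' u0 c ↔ GPV.L u i ∈ S' := by simp only [srS, Finset.mem_filter, Finset.mem_univ, true_and]; simp [srP]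
@[simp] lemma mem_sr_R_self (S' : Finset (GPV V n0)) (u0 : V) (c : Bool) (j : Fin (10*n0)) :
    GPV.R u0 j ∈ srS n0 S' u0 c ↔ c = true := by simp only [srS, Finset.mem_filter, Finset.mem_univ, true_and]; simp [srP]
lemma mem_sr_R_ne (S' : Finset (GPV V n0)) {u u0 : V} (h : u ≠ u0) (c : Bool) (j : Fin (10*n0)) :
    GPV.R u j ∈ srS n0 S' u0 c ↔ GPV.R u j ∈ S' := by simp only [srS, Finset.mem_filter, Finset.mem_univ, true_and]; simp [srP, h]
@[simp] lemma mem_sr_X (S' : Finset (GPV V n0)) (u0 : V) (c : Bool) (k : Fin (100*n0*n0)) :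
    GPV.X k ∈ srS n0 S' u0 c ↔ GPV.X k ∈ S' := by simp only [srS, Finset.mem_filter, Finset.mem_univ, true_and]; simp [srP]
@[simp] lemma mem_sr_Y (S' : Finset (GPV V n0)) (u0 : V) (c : Bool) (k : Fin (100*n0*n0)) :
    GPV.Y k ∈ srS n0 S' u0 c ↔ GPV.Y k ∈ S' := by simp only [srS, Finset.mem_filter, Finset.mem_univ, true_and]; simp [srP]
@[simp] lemma mem_sr_W (S' : Finset (GPV V n0)) (u0 : V) (c : Bool) :
    (GPV.W : GPV V n0) ∈ srS n0 S' u0 c ↔ (GPV.W : GPV V n0) ∈ S' := by simp only [srS, Finset.mem_filter, Finset.mem_univ, true_and]; simp [srP]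

lemma hcore_le (hn0 : 0 < n0) (hV : Fintype.card V = n0) (S' : Finset (GPV V n0))
    (hmax : ∀ T', cutSet (Gp n0 G) T' ≤ cutSet (Gp n0 G) S') (Sm : Finset (GPV V n0))
    (hXm : ∀ k, GPV.X k ∈ Sm ↔ GPV.X k ∈ S') (hYm : ∀ k, GPV.Y k ∈ Sm ↔ GPV.Y k ∈ S') :
    core n0 G Sm ≤ core n0 G S' := by
  have hor := xy_structure hn0 hV S' hmax
  have horm : ((∀ k, GPV.X k ∈ Sm) ∧ (∀ k, GPV.Y k ∉ Sm)) ∨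
      ((∀ k, GPV.X k ∉ Sm) ∧ (∀ k, GPV.Y k ∈ Sm)) := by
    refine hor.imp (fun ⟨a, b⟩ => ⟨fun k => (hXm k).2 (a k), fun k hk => b k ((hYm k).1 hk)⟩)
      (fun ⟨a, b⟩ => ⟨fun k hk => a k ((hXm k).1 hk), fun k => (hYm k).2 (b k)⟩)
  have h1 := hmax Sm
  rw [cut_form hn0 hV Sm horm, cut_form hn0 hV S' hor] at h1
  exact Nat.le_of_add_le_add_right h1

lemma LR_pure (hn0 : 0 < n0) (hV : Fintype.card V = n0) (S' : Finset (GPV V n0))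
    (hmax : ∀ T', cutSet (Gp n0 G) T' ≤ cutSet (Gp n0 G) S') (u0 : V) :
    (ain n0 S' u0 = n0 + 1 ∨ ain n0 S' u0 = 0) ∧
      ain n0 S' u0 * boutR n0 S' u0 + binR n0 S' u0 * aout n0 S' u0 = (n0+1) * (10*n0) := by
  have hsum := ain_add_aout S' u0
  have hbsum := bin_add_bout S' u0
  have hcard : (univ.erase u0).card + 1 = n0 := by
    rw [Finset.card_erase_add_one (Finset.mem_univ u0), Finset.card_univ, hV]
  set e := (univ.erase u0).card with he
  -- common pieces for both exchanges
  have hRest : ∀ c, (∑ u ∈ univ.erase u0, ∑ i : Fin (n0+1), ∑ v ∈ univ.erase u0,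
      tA n0 G (slS n0 S' u0 c) u i v)
      = (∑ u ∈ univ.erase u0, ∑ i : Fin (n0+1), ∑ v ∈ univ.erase u0, tA n0 G S' u i v) := by
    intro c
    refine Finset.sum_congr rfl fun u hu => Finset.sum_congr rfl fun i _ =>
      Finset.sum_congr rfl fun v hv => ?_
    have hu' := (Finset.mem_erase.1 hu).1
    have hv' := (Finset.mem_erase.1 hv).1
    simp only [tA, mem_sl_L_ne S' hu', mem_sl_L_ne S' hv']
  have hGRest : ∀ c, (∑ u ∈ univ.erase u0,
        (ain n0 (slS n0 S' u0 c) u * boutR n0 (slS n0 S' u0 c) u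
          + binR n0 (slS n0 S' u0 c) u * aout n0 (slS n0 S' u0 c) u))
      = ∑ u ∈ univ.erase u0, (ain n0 S' u * boutR n0 S' u + binR n0 S' u * aout n0 S' u) := by
    intro c
    refine Finset.sum_congr rfl fun u hu => ?_
    have hu' := (Finset.mem_erase.1 hu).1
    simp only [ain, aout, binR, boutR, ASet]
    congr 3 <;> · congr 1; ext; simp [mem_sl_L_ne S' hu', mem_sl_R_ne S' hu']
  have hWRest : ∀ c, (∑ u ∈ univ.erase u0, (if (GPV.W : GPV V n0) ∈ slS n0 S' u0 c then
        (if GPV.L u ⟨0, Nat.succ_pos n0⟩ ∉ slS n0 S' u0 c then 1 else 0)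
        else (if GPV.L u ⟨0, Nat.succ_pos n0⟩ ∈ slS n0 S' u0 c then 1 else 0)))
      = ∑ u ∈ univ.erase u0, (if (GPV.W : GPV V n0) ∈ S' then
        (if GPV.L u ⟨0, Nat.succ_pos n0⟩ ∉ S' then 1 else 0)
        else (if GPV.L u ⟨0, Nat.succ_pos n0⟩ ∈ S' then 1 else 0)) := by
    intro c
    refine Finset.sum_congr rfl fun u hu => ?_
    have hu' := (Finset.mem_erase.1 hu).1
    simp only [mem_sl_W, mem_sl_L_ne S' hu']
  -- gadget values at u0 for the modified sets
  have hgad : ∀ c, ain n0 (slS n0 S' u0 c) u0 * boutR n0 (slS n0 S' u0 c) u0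
      + binR n0 (slS n0 S' u0 c) u0 * aout n0 (slS n0 S' u0 c) u0 = (n0+1) * (10*n0) := by
    intro c
    have h1 : ain n0 (slS n0 S' u0 c) u0 = if c = true then n0+1 else 0 := by
      rw [ain, ASet]; split <;> rename_i hc <;> simp [hc]
    have h2 : aout n0 (slS n0 S' u0 c) u0 = if c = true then 0 else n0+1 := by
      rw [aout]; split <;> rename_i hc <;> simp [hc]
    have h3 : binR n0 (slS n0 S' u0 c) u0 = if c = true then 0 else 10*n0 := by
      rw [binR]; split <;> rename_i hc <;> simp [hc]
    have h4 : boutR n0 (slS n0 S' u0 c) u0 = if c = true then 10*n0 else 0 := by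
      rw [boutR]; split <;> rename_i hc <;> simp [hc]
    rw [h1, h2, h3, h4]
    cases c <;> simp <;> ring
  -- the two exchange inequalities
  have hI : ∀ c, (∑ i : Fin (n0+1), ∑ v, tA n0 G (slS n0 S' u0 c) u0 i v)
        + (∑ u ∈ univ.erase u0, ∑ i : Fin (n0+1), tA n0 G (slS n0 S' u0 c) u i u0)
        + (n0+1) * (10*n0)
      ≤ (∑ i : Fin (n0+1), ∑ v, tA n0 G S' u0 i v)
        + (∑ u ∈ univ.erase u0, ∑ i : Fin (n0+1), tA n0 G S' u i u0)
        + (ain n0 S' u0 * boutR n0 S' u0 + binR n0 S' u0 * aout n0 S' u0)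
        + 1 := by
    intro c
    have h := hcore_le hn0 hV S' hmax (slS n0 S' u0 c)
      (fun k => mem_sl_X S' u0 c k) (fun k => mem_sl_Y S' u0 c k)
    rw [core, core, coreL_split (slS n0 S' u0 c) u0, coreL_split S' u0,
      coreG_split (slS n0 S' u0 c) u0, coreG_split S' u0,
      coreW_split (slS n0 S' u0 c) u0, coreW_split S' u0,
      hRest c, hGRest c, hWRest c, hgad c] at h
    have hw0' : (if (GPV.W : GPV V n0) ∈ S' then
        (if GPV.L u0 ⟨0, Nat.succ_pos n0⟩ ∉ S' then (1:ℕ) else 0)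
      else (if GPV.L u0 ⟨0, Nat.succ_pos n0⟩ ∈ S' then 1 else 0)) ≤ 1 := by
      split <;> split <;> simp
    have hw1' : (0:ℕ) ≤ (if (GPV.W : GPV V n0) ∈ slS n0 S' u0 c then
        (if GPV.L u0 ⟨0, Nat.succ_pos n0⟩ ∉ slS n0 S' u0 c then (1:ℕ) else 0)
      else (if GPV.L u0 ⟨0, Nat.succ_pos n0⟩ ∈ slS n0 S' u0 c then 1 else 0)) := Nat.zero_le _
    linarith
  -- row/col bounds
  have hw0 : (if (GPV.W : GPV V n0) ∈ S' then
        (if GPV.L u0 ⟨0, Nat.succ_pos n0⟩ ∉ S' then (1:ℕ) else 0)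
      else (if GPV.L u0 ⟨0, Nat.succ_pos n0⟩ ∈ S' then 1 else 0)) ≤ 1 := by
    split <;> split <;> simp
  -- c = true : new row dominates old row, new col vanishes
  have hrow_t : (∑ i : Fin (n0+1), ∑ v, tA n0 G S' u0 i v)
      ≤ ∑ i : Fin (n0+1), ∑ v, tA n0 G (slS n0 S' u0 true) u0 i v := by
    refine Finset.sum_le_sum fun i _ => Finset.sum_le_sum fun v _ => ?_
    by_cases hv : v = u0
    · subst hv; simp [tA]
    · simp only [tA, mem_sl_L_self, mem_sl_L_ne S' hv]
      split
      · split
        · split <;> simp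
        · simp
      · exact le_refl _
  have hcol_t : (∑ u ∈ univ.erase u0, ∑ i : Fin (n0+1), tA n0 G (slS n0 S' u0 true) u i u0)
      = 0 := by
    refine Finset.sum_eq_zero fun u hu => Finset.sum_eq_zero fun i _ => ?_
    simp [tA]
  -- c = false : new col dominates old col, new row vanishes
  have hcol_f : (∑ u ∈ univ.erase u0, ∑ i : Fin (n0+1), tA n0 G S' u i u0)
      ≤ ∑ u ∈ univ.erase u0, ∑ i : Fin (n0+1), tA n0 G (slS n0 S' u0 false) u i u0 := by
    refine Finset.sum_le_sum fun u hu => Finset.sum_le_sum fun i _ => ?_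
    have hu' := (Finset.mem_erase.1 hu).1
    simp only [tA, mem_sl_L_self, mem_sl_L_ne S' hu']
    split
    · split
      · split <;> simp
      · exact le_refl _
    · exact le_refl _
  have hrow_f : (∑ i : Fin (n0+1), ∑ v, tA n0 G (slS n0 S' u0 false) u0 i v) = 0 := by
    refine Finset.sum_eq_zero fun i _ => Finset.sum_eq_zero fun v _ => ?_
    simp [tA]
  -- old col is at most e * aout u0
  have hcol_le : (∑ u ∈ univ.erase u0, ∑ i : Fin (n0+1), tA n0 G S' u i u0)
      ≤ e * aout n0 S' u0 := by
    calc (∑ u ∈ univ.erase u0, ∑ i : Fin (n0+1), tA n0 G S' u i u0)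
        ≤ ∑ _u ∈ univ.erase u0, aout n0 S' u0 := by
          refine Finset.sum_le_sum fun u _ => ?_
          rw [aout, ← sum_ind]
          refine Finset.sum_le_sum fun i _ => ?_
          rw [tA]
          split
          · split
            · exact le_refl _
            · split <;> simp
          · split <;> simp
      _ = e * aout n0 S' u0 := by rw [Finset.sum_const, smul_eq_mul]
  -- old row is at most e * ain u0
  have hrow_le : (∑ i : Fin (n0+1), ∑ v, tA n0 G S' u0 i v) ≤ e * ain n0 S' u0 := by
    have h1 : ∀ i : Fin (n0+1), (∑ v, tA n0 G S' u0 i v)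
        ≤ e * (if GPV.L u0 i ∈ S' then 1 else 0) := by
      intro i
      have h2 : ∀ v : V, tA n0 G S' u0 i v
          ≤ (if v = u0 then 0 else (if GPV.L u0 i ∈ S' then 1 else 0)) := by
        intro v
        by_cases hv : v = u0
        · subst hv; simp [tA]
        · rw [tA, if_neg hv]
          split
          · split
            · split <;> simp
            · simp
          · simp
      calc (∑ v, tA n0 G S' u0 i v)
          ≤ ∑ v : V, (if v = u0 then 0 else (if GPV.L u0 i ∈ S' then 1 else 0)) :=
            Finset.sum_le_sum fun v _ => h2 v
        _ = e * (if GPV.L u0 i ∈ S' then 1 else 0) := by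
            rw [← Finset.add_sum_erase _ _ (Finset.mem_univ u0), if_pos rfl, zero_add]
            rw [Finset.sum_congr rfl (fun v hv => if_neg (Finset.mem_erase.1 hv).1),
              Finset.sum_const, smul_eq_mul]
    calc (∑ i : Fin (n0+1), ∑ v, tA n0 G S' u0 i v)
        ≤ ∑ i : Fin (n0+1), e * (if GPV.L u0 i ∈ S' then 1 else 0) :=
          Finset.sum_le_sum fun i _ => h1 i
      _ = e * ain n0 S' u0 := by rw [← Finset.mul_sum, sum_ind]; rfl
  -- assemble the two inequalities
  have hIt := hI true
  rw [hcol_t] at hIt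
  have hIf := hI false
  rw [hrow_f] at hIf
  -- hIt : rowNew_t + 0 + K + w1 ≤ rowOld + colOld + g0 + w0
  -- with rowOld ≤ rowNew_t : K + w1 ≤ colOld + g0 + w0
  have hA : (n0+1) * (10*n0) ≤ e * aout n0 S' u0
      + (ain n0 S' u0 * boutR n0 S' u0 + binR n0 S' u0 * aout n0 S' u0) + 1 := by
    linarith [hcol_le, hIt, hrow_t]
  have hB : (n0+1) * (10*n0) ≤ e * ain n0 S' u0
      + (ain n0 S' u0 * boutR n0 S' u0 + binR n0 S' u0 * aout n0 S' u0) + 1 := by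
    linarith [hrow_le, hIf, hcol_f]
  -- L-purity
  have hLpure : ain n0 S' u0 = n0 + 1 ∨ ain n0 S' u0 = 0 := by
    rcases le_total (aout n0 S' u0) (ain n0 S' u0) with hle | hle
    · left
      have hg0 : ain n0 S' u0 * boutR n0 S' u0 + binR n0 S' u0 * aout n0 S' u0
          ≤ ain n0 S' u0 * (10*n0) := by nlinarith [hbsum]
      have hmul1 : (ain n0 S' u0 + aout n0 S' u0) * (10*n0) = (n0+1)*(10*n0) := by rw [hsum]
      have h10 : (10*n0) * aout n0 S' u0 ≤ e * aout n0 S' u0 + 1 := by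
        ring_nf at hmul1 hA hg0 ⊢
        linarith
      have hmul2 : e * aout n0 S' u0 + aout n0 S' u0 = n0 * aout n0 S' u0 := by
        have h' := congrArg (· * aout n0 S' u0) hcard
        simp only [add_mul, one_mul] at h'
        exact h'
      have haa : aout n0 S' u0 ≤ n0 * aout n0 S' u0 := Nat.le_mul_of_pos_left _ hn0
      have : aout n0 S' u0 = 0 := by
        ring_nf at h10 hmul2 haa ⊢
        linarith
      omega
    · right
      have hg0 : ain n0 S' u0 * boutR n0 S' u0 + binR n0 S' u0 * aout n0 S' u0
          ≤ aout n0 S' u0 * (10*n0) := by nlinarith [hbsum]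
      have hmul1 : (ain n0 S' u0 + aout n0 S' u0) * (10*n0) = (n0+1)*(10*n0) := by rw [hsum]
      have h10 : (10*n0) * ain n0 S' u0 ≤ e * ain n0 S' u0 + 1 := by
        ring_nf at hmul1 hB hg0 ⊢
        linarith
      have hmul2 : e * ain n0 S' u0 + ain n0 S' u0 = n0 * ain n0 S' u0 := by
        have h' := congrArg (· * ain n0 S' u0) hcard
        simp only [add_mul, one_mul] at h'
        exact h'
      have haa : ain n0 S' u0 ≤ n0 * ain n0 S' u0 := Nat.le_mul_of_pos_left _ hn0
      have : ain n0 S' u0 = 0 := by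
        ring_nf at h10 hmul2 haa ⊢
        linarith
      exact this
  -- R-purity via the srS exchange
  have hgadR : ∀ c, core n0 G (srS n0 S' u0 c) + (ain n0 S' u0 * boutR n0 S' u0
      + binR n0 S' u0 * aout n0 S' u0)
      = core n0 G S' + (if c = true then (10*n0) * aout n0 S' u0
          else ain n0 S' u0 * (10*n0)) := by
    intro c
    rw [core, core, coreG_split (srS n0 S' u0 c) u0, coreG_split S' u0]
    have hL : coreL n0 G (srS n0 S' u0 c) = coreL n0 G S' := by
      rw [coreL, coreL]
      refine Finset.sum_congr rfl fun u _ => Finset.sum_congr rfl fun i _ =>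
        Finset.sum_congr rfl fun v _ => ?_
      simp only [mem_sr_L]
    have hW : coreW n0 (srS n0 S' u0 c) = coreW n0 S' := by
      rw [coreW, coreW]
      refine Finset.sum_congr rfl fun u _ => ?_
      simp only [mem_sr_L, mem_sr_W]
    have hGR : (∑ u ∈ univ.erase u0,
        (ain n0 (srS n0 S' u0 c) u * boutR n0 (srS n0 S' u0 c) u
          + binR n0 (srS n0 S' u0 c) u * aout n0 (srS n0 S' u0 c) u))
        = ∑ u ∈ univ.erase u0,
            (ain n0 S' u * boutR n0 S' u + binR n0 S' u * aout n0 S' u) := by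
      refine Finset.sum_congr rfl fun u hu => ?_
      have hu' := (Finset.mem_erase.1 hu).1
      simp only [ain, aout, binR, boutR, ASet]
      congr 3 <;> · congr 1; ext; simp [mem_sr_R_ne S' hu']
    have h1 : ain n0 (srS n0 S' u0 c) u0 = ain n0 S' u0 := by
      rw [ain, ain, ASet, ASet]; congr 1; ext; simp
    have h2 : aout n0 (srS n0 S' u0 c) u0 = aout n0 S' u0 := by
      rw [aout, aout]; congr 1; ext; simp
    have h3 : binR n0 (srS n0 S' u0 c) u0 = if c = true then 10*n0 else 0 := by
      rw [binR]; split <;> rename_i hc <;> simp [hc]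
    have h4 : boutR n0 (srS n0 S' u0 c) u0 = if c = true then 0 else 10*n0 := by
      rw [boutR]; split <;> rename_i hc <;> simp [hc]
    rw [hL, hW, hGR, h1, h2, h3, h4]
    cases c <;> simp <;> ring
  have hRin : (10*n0) * aout n0 S' u0 ≤ ain n0 S' u0 * boutR n0 S' u0
      + binR n0 S' u0 * aout n0 S' u0 := by
    have h := hcore_le hn0 hV S' hmax (srS n0 S' u0 true)
      (fun k => mem_sr_X S' u0 true k) (fun k => mem_sr_Y S' u0 true k)
    have h2 := hgadR true
    simp at h2
    linarith
  have hRout : ain n0 S' u0 * (10*n0) ≤ ain n0 S' u0 * boutR n0 S' u0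
      + binR n0 S' u0 * aout n0 S' u0 := by
    have h := hcore_le hn0 hV S' hmax (srS n0 S' u0 false)
      (fun k => mem_sr_X S' u0 false k) (fun k => mem_sr_Y S' u0 false k)
    have h2 := hgadR false
    simp at h2
    linarith
  refine ⟨hLpure, ?_⟩
  rcases hLpure with h0 | h0
  · have ha0 : aout n0 S' u0 = 0 := by omega
    rw [h0, ha0] at hRout
    have hb : 10*n0 ≤ boutR n0 S' u0 := by
      have h' : (n0+1) * (10*n0) ≤ (n0+1) * boutR n0 S' u0 := by
        calc (n0+1) * (10*n0) ≤ (n0+1) * boutR n0 S' u0 + binR n0 S' u0 * 0 := hRout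
        _ = (n0+1) * boutR n0 S' u0 := by ring
      exact Nat.le_of_mul_le_mul_left h' (Nat.succ_pos n0)
    have hb2 : boutR n0 S' u0 = 10*n0 := by omega
    rw [h0, ha0, hb2]
    ring
  · have ha0 : aout n0 S' u0 = n0+1 := by omega
    rw [h0, ha0] at hRin
    have hb : 10*n0 ≤ binR n0 S' u0 := by
      have h' : (10*n0) * (n0+1) ≤ binR n0 S' u0 * (n0+1) := by
        calc (10*n0) * (n0+1) = (10*n0) * (n0+1) + 0 * boutR n0 S' u0 := by ring
        _ ≤ binR n0 S' u0 * (n0+1) := by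
            have := hRin
            linarith
      exact Nat.le_of_mul_le_mul_right h' (Nat.succ_pos n0)
    have hb2 : binR n0 S' u0 = 10*n0 := by omega
    rw [h0, ha0, hb2]
    ring

lemma core_val (hn0 : 0 < n0) (hV : Fintype.card V = n0) (S' : Finset (GPV V n0))
    (hmax : ∀ T', cutSet (Gp n0 G) T' ≤ cutSet (Gp n0 G) S') :
    ∃ w ≤ n0, core n0 G S'
      = (n0+1) * cutSet G (Finset.univ.filter (fun u : V => ∀ i, GPV.L u i ∈ S'))
        + n0 * ((n0+1) * (10*n0)) + w := by
  set Sp := Finset.univ.filter (fun u : V => ∀ i, GPV.L u i ∈ S') with hSp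
  have hpure := fun u => LR_pure hn0 hV S' hmax u
  have hmem : ∀ u : V, u ∈ Sp ↔ ain n0 S' u = n0 + 1 := by
    intro u
    rw [hSp, Finset.mem_filter]
    simp only [Finset.mem_univ, true_and]
    constructor
    · intro h
      rw [ain, ASet, Finset.filter_true_of_mem (fun i _ => h i), Finset.card_univ,
        Fintype.card_fin]
    · intro h i
      have : ASet n0 S' u = Finset.univ := by
        apply Finset.eq_univ_of_card
        rw [← ain, h]; simp
      have hi : i ∈ ASet n0 S' u := this ▸ Finset.mem_univ i
      exact (Finset.mem_filter.1 hi).2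
  have hnotmem : ∀ u : V, u ∉ Sp → ∀ i, GPV.L u i ∉ S' := by
    intro u hu i
    have h0 : ain n0 S' u = 0 := by
      rcases (hpure u).1 with h | h
      · exact absurd ((hmem u).2 h) hu
      · exact h
    have : ASet n0 S' u = ∅ := Finset.card_eq_zero.1 h0
    intro hi
    have : i ∈ ASet n0 S' u := by rw [ASet]; simp [hi]
    rw [Finset.card_eq_zero.1 h0] at this
    exact absurd this (Finset.notMem_empty i)
  have hL : coreL n0 G S' = (n0+1) * cutSet G Sp := by
    rw [coreL_eq, cutSet_eq_sum, Finset.mul_sum]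
    refine Finset.sum_congr rfl fun u _ => ?_
    rw [Finset.sum_comm, Finset.mul_sum]
    refine Finset.sum_congr rfl fun v _ => ?_
    by_cases hadj : G.Adj u v
    · by_cases hu : u ∈ Sp
      · have huin : ∀ i, GPV.L u i ∈ S' := fun i => (Finset.mem_filter.1 hu).2 i
        by_cases hv : v ∈ Sp
        · have hvin : ∀ i, GPV.L v i ∈ S' := fun i => (Finset.mem_filter.1 hv).2 i
          have ht : ∀ i : Fin (n0+1), tA n0 G S' u i v = 0 := fun i => by
            simp [tA, hadj, huin i, hvin i]
          rw [Finset.sum_congr rfl (fun i _ => ht i), Finset.sum_const, smul_eq_mul,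
            mul_zero, if_neg (by simp [hadj, hu, hv] : ¬(G.Adj u v ∧ u ∈ Sp ∧ v ∉ Sp)),
            mul_zero]
        · have hvout := hnotmem v hv
          have ht : ∀ i : Fin (n0+1), tA n0 G S' u i v = 1 := fun i => by
            simp [tA, hadj, huin i, hvout i]
          rw [Finset.sum_congr rfl (fun i _ => ht i), Finset.sum_const, smul_eq_mul,
            mul_one, if_pos ⟨hadj, hu, hv⟩, mul_one, Finset.card_univ, Fintype.card_fin]
      · have huout := hnotmem u hu
        have ht : ∀ i : Fin (n0+1), tA n0 G S' u i v = 0 := fun i => by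
          simp [tA, hadj, huout i]
        rw [Finset.sum_congr rfl (fun i _ => ht i), Finset.sum_const, smul_eq_mul,
          mul_zero, if_neg (by simp [hu] : ¬(G.Adj u v ∧ u ∈ Sp ∧ v ∉ Sp)), mul_zero]
    · have ht : ∀ i : Fin (n0+1), tA n0 G S' u i v = 0 := fun i => by simp [tA, hadj]
      rw [Finset.sum_congr rfl (fun i _ => ht i), Finset.sum_const, smul_eq_mul, mul_zero,
        if_neg (by simp [hadj] : ¬(G.Adj u v ∧ u ∈ Sp ∧ v ∉ Sp)), mul_zero]
  have hG : coreG n0 S' = n0 * ((n0+1)*(10*n0)) := by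
    rw [coreG, Finset.sum_congr rfl (fun u _ => (hpure u).2), Finset.sum_const,
      Finset.card_univ, hV, smul_eq_mul]
  exact ⟨coreW n0 S', coreW_le hV S', by rw [core, hL, hG]⟩

end Aux

theorem projection_of_maxcut_is_maxcut
    (n0 : ℕ) (hn0 : 0 < n0) {V : Type} [Fintype V] [DecidableEq V]
    (hV : Fintype.card V = n0) (G : SimpleGraph V) [DecidableRel G.Adj]
    (S' : Finset (GPV V n0)) (hS' : cutSet (Gp n0 G) S' = maxCut (Gp n0 G)) :
    cutSet G (Finset.univ.filter (fun u : V => ∀ i, GPV.L u i ∈ S')) = maxCut G := by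
  have hmax : ∀ T', cutSet (Gp n0 G) T' ≤ cutSet (Gp n0 G) S' := by
    intro T'
    rw [hS']
    exact Finset.le_sup (Finset.mem_univ T')
  obtain ⟨w, hw, hcore⟩ := core_val (G := G) hn0 hV S' hmax
  have hform := cut_form (G := G) hn0 hV S' (xy_structure (G := G) hn0 hV S' hmax)
  have hcanon : ∀ T : Finset V, cutSet G T
      ≤ cutSet G (Finset.univ.filter (fun u : V => ∀ i, GPV.L u i ∈ S')) := by
    intro T
    have h1 := hmax (canonS n0 T)
    rw [canon_val (G := G) hn0 hV T, hform, hcore] at h1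
    by_contra hcon
    push_neg at hcon
    have h2 : (n0+1) * (cutSet G
        (Finset.univ.filter (fun u : V => ∀ i, GPV.L u i ∈ S')) + 1)
        ≤ (n0+1) * cutSet G T := Nat.mul_le_mul_left _ hcon
    ring_nf at h1 h2
    linarith [hw, Nat.zero_le T.card]
  exact le_antisymm (Finset.le_sup (Finset.mem_univ _))
    (Finset.sup_le fun T _ => hcanon T)

end QAOA
end
end

section
/- In the graph G', the degrees of the special vertices satisfy deg(x_0) = deg(y_0) = 100n0² + n0·(11n0+1) + 1, and for every edge {a,b} of G' with {a,b} ≠ {x_0,y_0} one has deg(a) + deg(b) < deg(x_0) + deg(y_0). In particular, deg(x_0) + deg(y_0) − 2 = 200n0² + 2n0·(11n0+1). -/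
/-!
STATEMENT 15: in G′, deg(x₀) = deg(y₀) = 100 n₀² + n₀(11 n₀ + 1) + 1; every edge
{a,b} ≠ {x₀,y₀} satisfies deg(a) + deg(b) < deg(x₀) + deg(y₀); and
deg(x₀) + deg(y₀) - 2 = 200 n₀² + 2 n₀(11 n₀ + 1).
-/
noncomputable section

namespace QAOA

section Aux
open Finset
variable (n0 : ℕ) (hn0 : 0 < n0) {V : Type} [Fintype V] [DecidableEq V]
  (G : SimpleGraph V) [DecidableRel G.Adj]

lemma nbhd_x0 :
    (Gp n0 G).neighborFinset (xzero V n0 hn0) =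
      ((univ : Finset (Fin (100*n0*n0))).image GPV.Y ∪
       (univ : Finset (V × Fin (n0+1))).image (fun p => GPV.L p.1 p.2) ∪
       (univ : Finset (V × Fin (10*n0))).image (fun p => GPV.R p.1 p.2) ∪
       {GPV.W}) := by
  ext b
  rw [SimpleGraph.mem_neighborFinset]
  cases b <;>
    simp [Gp, SimpleGraph.mem_neighborFinset, SimpleGraph.fromRel_adj, gpRel, xzero]

lemma deg_x0 (hV : Fintype.card V = n0) :
    (Gp n0 G).degree (xzero V n0 hn0) = 100 * n0 ^ 2 + n0 * (11 * n0 + 1) + 1 := by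
  rw [SimpleGraph.degree, nbhd_x0]
  rw [card_union_of_disjoint, card_union_of_disjoint, card_union_of_disjoint,
    card_image_of_injective _ (fun a b h => by simpa using h),
    card_image_of_injective _ (fun a b h => by
      obtain ⟨h1, h2⟩ := GPV.L.inj h; exact Prod.ext h1 h2),
    card_image_of_injective _ (fun a b h => by
      obtain ⟨h1, h2⟩ := GPV.R.inj h; exact Prod.ext h1 h2)]
  · simp [hV]; ring
  · simp [disjoint_left]
  · simp only [disjoint_left, mem_union, mem_image, mem_univ, true_and]
    aesop
  · simp only [disjoint_left, mem_union, mem_image, mem_singleton, mem_univ, true_and]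
    aesop

lemma nbhd_y0 :
    (Gp n0 G).neighborFinset (yzero V n0 hn0) =
      ((univ : Finset (Fin (100*n0*n0))).image GPV.X ∪
       (univ : Finset (V × Fin (n0+1))).image (fun p => GPV.L p.1 p.2) ∪
       (univ : Finset (V × Fin (10*n0))).image (fun p => GPV.R p.1 p.2) ∪
       {GPV.W}) := by
  ext b
  rw [SimpleGraph.mem_neighborFinset]
  cases b <;>
    simp [Gp, SimpleGraph.mem_neighborFinset, SimpleGraph.fromRel_adj, gpRel, yzero]

lemma deg_y0 (hV : Fintype.card V = n0) :
    (Gp n0 G).degree (yzero V n0 hn0) = 100 * n0 ^ 2 + n0 * (11 * n0 + 1) + 1 := by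
  rw [SimpleGraph.degree, nbhd_y0]
  rw [card_union_of_disjoint, card_union_of_disjoint, card_union_of_disjoint,
    card_image_of_injective _ (fun a b h => by simpa using h),
    card_image_of_injective _ (fun a b h => by
      obtain ⟨h1, h2⟩ := GPV.L.inj h; exact Prod.ext h1 h2),
    card_image_of_injective _ (fun a b h => by
      obtain ⟨h1, h2⟩ := GPV.R.inj h; exact Prod.ext h1 h2)]
  · simp [hV]; ring
  · simp [disjoint_left]
  · simp only [disjoint_left, mem_union, mem_image, mem_univ, true_and]
    aesop
  · simp only [disjoint_left, mem_union, mem_image, mem_singleton, mem_univ, true_and]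
    aesop

lemma deg_le (hV : Fintype.card V = n0) (a : GPV V n0)
    (hx : a ≠ xzero V n0 hn0) (hy : a ≠ yzero V n0 hn0) :
    (Gp n0 G).degree a ≤ 100 * n0 ^ 2 := by
  rw [SimpleGraph.degree]
  cases a with
  | X i =>
    have hi : (i : ℕ) ≠ 0 := fun h => hx (by simp [xzero]; exact Fin.ext h)
    have hsub : (Gp n0 G).neighborFinset (GPV.X i) ⊆
        (univ : Finset (Fin (100*n0*n0))).image GPV.Y := by
      intro b hb
      rw [SimpleGraph.mem_neighborFinset] at hb
      cases b <;> simp_all [Gp, SimpleGraph.fromRel_adj, gpRel]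
    calc ((Gp n0 G).neighborFinset (GPV.X i)).card
        ≤ _ := card_le_card hsub
      _ ≤ (univ : Finset (Fin (100*n0*n0))).card := card_image_le
      _ ≤ 100 * n0 ^ 2 := by simp [sq, Nat.mul_assoc]
  | Y i =>
    have hi : (i : ℕ) ≠ 0 := fun h => hy (by simp [yzero]; exact Fin.ext h)
    have hsub : (Gp n0 G).neighborFinset (GPV.Y i) ⊆
        (univ : Finset (Fin (100*n0*n0))).image GPV.X := by
      intro b hb
      rw [SimpleGraph.mem_neighborFinset] at hb
      cases b <;> simp_all [Gp, SimpleGraph.fromRel_adj, gpRel]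
    calc ((Gp n0 G).neighborFinset (GPV.Y i)).card
        ≤ _ := card_le_card hsub
      _ ≤ (univ : Finset (Fin (100*n0*n0))).card := card_image_le
      _ ≤ 100 * n0 ^ 2 := by simp [sq, Nat.mul_assoc]
  | L u i =>
    have hsub : (Gp n0 G).neighborFinset (GPV.L u i) ⊆
        ((univ : Finset (V × Fin (n0+1))).image (fun p => GPV.L p.1 p.2) ∪
         (univ : Finset (V × Fin (10*n0))).image (fun p => GPV.R p.1 p.2) ∪
         {xzero V n0 hn0, yzero V n0 hn0, GPV.W}) := by
      intro b hb
      rw [SimpleGraph.mem_neighborFinset] at hb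
      cases b <;>
        simp [Gp, SimpleGraph.fromRel_adj, gpRel, xzero, yzero] at hb ⊢ <;> aesop
    calc ((Gp n0 G).neighborFinset (GPV.L u i)).card
        ≤ _ := card_le_card hsub
      _ ≤ _ := card_union_le _ _
      _ ≤ n0 * (n0 + 1) + 10 * n0 * n0 + 3 := by
          gcongr
          · calc _ ≤ _ := card_union_le _ _
              _ ≤ n0 * (n0+1) + 10*n0*n0 := by
                  gcongr <;>
                    exact le_trans card_image_le (le_of_eq (by simp [hV]; try ring))
          · exact le_trans (card_insert_le _ _)
              (Nat.lt_succ_of_le (le_trans (card_insert_le _ _) (by simp)))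
      _ ≤ 100 * n0 ^ 2 := by nlinarith [hn0]
  | R u i =>
    have hsub : (Gp n0 G).neighborFinset (GPV.R u i) ⊆
        ((univ : Finset (V × Fin (n0+1))).image (fun p => GPV.L p.1 p.2) ∪
         (univ : Finset (V × Fin (10*n0))).image (fun p => GPV.R p.1 p.2) ∪
         {xzero V n0 hn0, yzero V n0 hn0, GPV.W}) := by
      intro b hb
      rw [SimpleGraph.mem_neighborFinset] at hb
      cases b <;>
        simp [Gp, SimpleGraph.fromRel_adj, gpRel, xzero, yzero] at hb ⊢ <;> aesop
    calc ((Gp n0 G).neighborFinset (GPV.R u i)).card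
        ≤ _ := card_le_card hsub
      _ ≤ _ := card_union_le _ _
      _ ≤ n0 * (n0 + 1) + 10 * n0 * n0 + 3 := by
          gcongr
          · calc _ ≤ _ := card_union_le _ _
              _ ≤ n0 * (n0+1) + 10*n0*n0 := by
                  gcongr <;>
                    exact le_trans card_image_le (le_of_eq (by simp [hV]; try ring))
          · exact le_trans (card_insert_le _ _)
              (Nat.lt_succ_of_le (le_trans (card_insert_le _ _) (by simp)))
      _ ≤ 100 * n0 ^ 2 := by nlinarith [hn0]
  | W =>
    have hsub : (Gp n0 G).neighborFinset GPV.W ⊆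
        ((univ : Finset (V × Fin (n0+1))).image (fun p => GPV.L p.1 p.2) ∪
         (univ : Finset (V × Fin (10*n0))).image (fun p => GPV.R p.1 p.2) ∪
         {xzero V n0 hn0, yzero V n0 hn0, GPV.W}) := by
      intro b hb
      rw [SimpleGraph.mem_neighborFinset] at hb
      cases b <;>
        simp [Gp, SimpleGraph.fromRel_adj, gpRel, xzero, yzero] at hb ⊢ <;> aesop
    calc ((Gp n0 G).neighborFinset GPV.W).card
        ≤ _ := card_le_card hsub
      _ ≤ _ := card_union_le _ _
      _ ≤ n0 * (n0 + 1) + 10 * n0 * n0 + 3 := by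
          gcongr
          · calc _ ≤ _ := card_union_le _ _
              _ ≤ n0 * (n0+1) + 10*n0*n0 := by
                  gcongr <;>
                    exact le_trans card_image_le (le_of_eq (by simp [hV]; try ring))
          · exact le_trans (card_insert_le _ _)
              (Nat.lt_succ_of_le (le_trans (card_insert_le _ _) (by simp)))
      _ ≤ 100 * n0 ^ 2 := by nlinarith [hn0]

end Aux

theorem special_vertices_dominate_degrees
    (n0 : ℕ) (hn0 : 0 < n0) {V : Type} [Fintype V] [DecidableEq V]
    (hV : Fintype.card V = n0) (G : SimpleGraph V) [DecidableRel G.Adj] :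
    (Gp n0 G).degree (xzero V n0 hn0) = 100 * n0 ^ 2 + n0 * (11 * n0 + 1) + 1 ∧
    (Gp n0 G).degree (yzero V n0 hn0) = 100 * n0 ^ 2 + n0 * (11 * n0 + 1) + 1 ∧
    (∀ a b : GPV V n0, (Gp n0 G).Adj a b →
      ¬((a = xzero V n0 hn0 ∧ b = yzero V n0 hn0) ∨
        (a = yzero V n0 hn0 ∧ b = xzero V n0 hn0)) →
      (Gp n0 G).degree a + (Gp n0 G).degree b <
        (Gp n0 G).degree (xzero V n0 hn0) + (Gp n0 G).degree (yzero V n0 hn0)) ∧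
    ((Gp n0 G).degree (xzero V n0 hn0) : ℤ) + ((Gp n0 G).degree (yzero V n0 hn0) : ℤ) - 2
      = 200 * (n0 : ℤ) ^ 2 + 2 * (n0 : ℤ) * (11 * (n0 : ℤ) + 1) := by
  have hx0 := deg_x0 n0 hn0 G hV
  have hy0 := deg_y0 n0 hn0 G hV
  have hlt : 100 * n0 ^ 2 < 100 * n0 ^ 2 + n0 * (11 * n0 + 1) + 1 := by omega
  have hall : ∀ c : GPV V n0, (Gp n0 G).degree c ≤ 100 * n0 ^ 2 + n0 * (11 * n0 + 1) + 1 := by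
    intro c
    by_cases hcx : c = xzero V n0 hn0
    · rw [hcx, hx0]
    by_cases hcy : c = yzero V n0 hn0
    · rw [hcy, hy0]
    · exact le_trans (deg_le n0 hn0 G hV c hcx hcy) (le_of_lt hlt)
  refine ⟨hx0, hy0, ?_, ?_⟩
  · intro a b hab hne
    rw [hx0, hy0]
    have hne2 : a ≠ b := (Gp n0 G).ne_of_adj hab
    by_cases hax : a = xzero V n0 hn0
    · have hby : b ≠ yzero V n0 hn0 := fun h => hne (Or.inl ⟨hax, h⟩)
      have hbx : b ≠ xzero V n0 hn0 := fun h => hne2 (hax.trans h.symm)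
      have hb := deg_le n0 hn0 G hV b hbx hby
      rw [hax, hx0]
      omega
    by_cases hay : a = yzero V n0 hn0
    · have hbx : b ≠ xzero V n0 hn0 := fun h => hne (Or.inr ⟨hay, h⟩)
      have hby : b ≠ yzero V n0 hn0 := fun h => hne2 (hay.trans h.symm)
      have hb := deg_le n0 hn0 G hV b hbx hby
      rw [hay, hy0]
      omega
    · have ha := deg_le n0 hn0 G hV a hax hay
      have hb := hall b
      omega
  · rw [hx0, hy0]
    push_cast
    ring

end QAOA
end
end

section
/- Let σ : V(G') → {+1,−1} be a spin assignment with σ_{x_0} ≠ σ_{y_0}, and let τ agree with σ on V(G') \ {x_0,y_0} with τ_{x_0} = −σ_{x_0} and τ_{y_0} = −σ_{y_0}. Define cut_{G'}(σ) as the number of edges {a,b} of G' with σ_a ≠ σ_b. Then cut_{G'}(σ) − cut_{G'}(τ) ≤ 200n0² − 2. -/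
/-!
STATEMENT 16: flipping the spins of both x₀ and y₀ in a spin assignment σ on G′
with σ(x₀) ≠ σ(y₀) decreases the cut value by at most 200 n₀² - 2:
cut(σ) - cut(τ) ≤ 200 n₀² - 2. Spins are ℤˣ = {1,-1}; cutCount counts edges with
differently-signed endpoints.
-/
noncomputable section

namespace QAOA

/-- Number of edges of `H` whose endpoints receive different signs under `σ`. -/
def cutCount {W : Type} [Fintype W] [DecidableEq W] (H : SimpleGraph W)
    [DecidableRel H.Adj] (σ : W → ℤˣ) : ℕ :=
  (Finset.univ.filter (fun pr : W × W => H.Adj pr.1 pr.2 ∧ σ pr.1 ≠ σ pr.2)).card / 2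

/-- Weight of an ordered pair: 1 if it is a cut edge, else 0. -/
def Fval (n0 : ℕ) {V : Type} [DecidableEq V] (G : SimpleGraph V) [DecidableRel G.Adj]
    (ρ : GPV V n0 → ℤˣ) (a b : GPV V n0) : ℤ :=
  if (Gp n0 G).Adj a b ∧ ρ a ≠ ρ b then 1 else 0

section AuxLemmas

variable {V : Type} [DecidableEq V] {n0 : ℕ} (G : SimpleGraph V) [DecidableRel G.Adj]

lemma Fval_nonneg (ρ : GPV V n0 → ℤˣ) (a b : GPV V n0) : (0:ℤ) ≤ Fval n0 G ρ a b := by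
  unfold Fval; split <;> norm_num

lemma Fval_le_one (ρ : GPV V n0 → ℤˣ) (a b : GPV V n0) : Fval n0 G ρ a b ≤ 1 := by
  unfold Fval; split <;> norm_num

lemma Fval_symm (ρ : GPV V n0 → ℤˣ) (a b : GPV V n0) :
    Fval n0 G ρ a b = Fval n0 G ρ b a := by
  unfold Fval
  by_cases h : (Gp n0 G).Adj a b ∧ ρ a ≠ ρ b
  · rw [if_pos h, if_pos ⟨h.1.symm, Ne.symm h.2⟩]
  · rw [if_neg h, if_neg (fun h' => h ⟨h'.1.symm, Ne.symm h'.2⟩)]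

lemma Fval_of_adj (ρ : GPV V n0 → ℤˣ) {a b : GPV V n0} (h : (Gp n0 G).Adj a b) :
    Fval n0 G ρ a b = if ρ a ≠ ρ b then 1 else 0 := by
  unfold Fval
  by_cases h2 : ρ a ≠ ρ b
  · rw [if_pos ⟨h, h2⟩, if_pos h2]
  · rw [if_neg (fun h' => h2 h'.2), if_neg h2]

lemma Fval_of_not_adj (ρ : GPV V n0 → ℤˣ) {a b : GPV V n0} (h : ¬ (Gp n0 G).Adj a b) :
    Fval n0 G ρ a b = 0 := by
  unfold Fval
  rw [if_neg (fun h' => h h'.1)]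

lemma Fval_self (ρ : GPV V n0 → ℤˣ) (a : GPV V n0) : Fval n0 G ρ a a = 0 := by
  unfold Fval
  rw [if_neg (fun h' => h'.2 rfl)]

lemma units_key (u v w : ℤˣ) (h : u ≠ v) :
    (if u ≠ w then (1:ℤ) else 0) + (if v ≠ w then 1 else 0) = 1 := by
  rcases Int.units_eq_one_or u with rfl | rfl <;>
    rcases Int.units_eq_one_or v with rfl | rfl <;>
      rcases Int.units_eq_one_or w with rfl | rfl <;> simp_all

end AuxLemmas

section AdjLemmas

variable {V : Type} [DecidableEq V] (n0 : ℕ) (hn0 : 0 < n0)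
  (G : SimpleGraph V) [DecidableRel G.Adj]

lemma adj_xzero_L (u : V) (i : Fin (n0 + 1)) :
    (Gp n0 G).Adj (xzero V n0 hn0) (GPV.L u i) :=
  (SimpleGraph.fromRel_adj _ _ _).mpr ⟨by simp [xzero], Or.inl rfl⟩

lemma adj_xzero_R (u : V) (i : Fin (10 * n0)) :
    (Gp n0 G).Adj (xzero V n0 hn0) (GPV.R u i) :=
  (SimpleGraph.fromRel_adj _ _ _).mpr ⟨by simp [xzero], Or.inl rfl⟩

lemma adj_yzero_L (u : V) (i : Fin (n0 + 1)) :
    (Gp n0 G).Adj (yzero V n0 hn0) (GPV.L u i) :=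
  (SimpleGraph.fromRel_adj _ _ _).mpr ⟨by simp [yzero], Or.inl rfl⟩

lemma adj_yzero_R (u : V) (i : Fin (10 * n0)) :
    (Gp n0 G).Adj (yzero V n0 hn0) (GPV.R u i) :=
  (SimpleGraph.fromRel_adj _ _ _).mpr ⟨by simp [yzero], Or.inl rfl⟩

lemma adj_xzero_W : (Gp n0 G).Adj (xzero V n0 hn0) GPV.W :=
  (SimpleGraph.fromRel_adj _ _ _).mpr ⟨by simp [xzero], Or.inr rfl⟩

lemma adj_yzero_W : (Gp n0 G).Adj (yzero V n0 hn0) GPV.W :=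
  (SimpleGraph.fromRel_adj _ _ _).mpr ⟨by simp [yzero], Or.inr rfl⟩

lemma adj_xzero_yzero : (Gp n0 G).Adj (xzero V n0 hn0) (yzero V n0 hn0) :=
  (SimpleGraph.fromRel_adj _ _ _).mpr ⟨by simp [xzero, yzero], Or.inl rfl⟩

lemma not_adj_xzero_X (j : Fin (100 * n0 * n0)) :
    ¬ (Gp n0 G).Adj (xzero V n0 hn0) (GPV.X j) := by
  intro h
  rcases (SimpleGraph.fromRel_adj _ _ _).mp h with ⟨-, h | h⟩ <;>
    exact Bool.false_ne_true h

lemma not_adj_yzero_Y (j : Fin (100 * n0 * n0)) :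
    ¬ (Gp n0 G).Adj (yzero V n0 hn0) (GPV.Y j) := by
  intro h
  rcases (SimpleGraph.fromRel_adj _ _ _).mp h with ⟨-, h | h⟩ <;>
    exact Bool.false_ne_true h

end AdjLemmas

/-- The 200 n₀² frame vertices of `G'`. -/
def frameSet (V : Type) [DecidableEq V] [Fintype V] (n0 : ℕ) : Finset (GPV V n0) :=
  Finset.univ.image (GPV.X : Fin (100 * n0 * n0) → GPV V n0) ∪
    Finset.univ.image (GPV.Y : Fin (100 * n0 * n0) → GPV V n0)

lemma frameSet_card (V : Type) [DecidableEq V] [Fintype V] (n0 : ℕ) :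
    (frameSet V n0).card = 200 * n0 * n0 := by
  have hX : Function.Injective (GPV.X : Fin (100 * n0 * n0) → GPV V n0) := by
    intro a b h; injection h
  have hY : Function.Injective (GPV.Y : Fin (100 * n0 * n0) → GPV V n0) := by
    intro a b h; injection h
  have hdisj : Disjoint
      (Finset.univ.image (GPV.X : Fin (100 * n0 * n0) → GPV V n0))
      (Finset.univ.image (GPV.Y : Fin (100 * n0 * n0) → GPV V n0)) := by
    rw [Finset.disjoint_left]
    rintro a ha hb
    obtain ⟨i, -, rfl⟩ := Finset.mem_image.mp ha
    obtain ⟨j, -, h⟩ := Finset.mem_image.mp hb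
    cases h
  rw [frameSet, Finset.card_union_of_disjoint hdisj,
    Finset.card_image_of_injective _ hX, Finset.card_image_of_injective _ hY,
    Finset.card_univ, Fintype.card_fin]
  ring
theorem flip_special_pair_cut_drop
    (n0 : ℕ) (hn0 : 0 < n0) {V : Type} [Fintype V] [DecidableEq V]
    (hV : Fintype.card V = n0) (G : SimpleGraph V) [DecidableRel G.Adj]
    (σ τ : GPV V n0 → ℤˣ)
    (hxy : σ (xzero V n0 hn0) ≠ σ (yzero V n0 hn0))
    (hτx : τ (xzero V n0 hn0) = -σ (xzero V n0 hn0))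
    (hτy : τ (yzero V n0 hn0) = -σ (yzero V n0 hn0))
    (hτ : ∀ a : GPV V n0, a ≠ xzero V n0 hn0 → a ≠ yzero V n0 hn0 → τ a = σ a) :
    (cutCount (Gp n0 G) σ : ℤ) - (cutCount (Gp n0 G) τ : ℤ)
      ≤ 200 * (n0 : ℤ) ^ 2 - 2 := by
  have hxyne : xzero V n0 hn0 ≠ yzero V n0 hn0 := by simp [xzero, yzero]
  have hadjxL : ∀ (u : V) i, (Gp n0 G).Adj (xzero V n0 hn0) (GPV.L u i) :=
    adj_xzero_L n0 hn0 G
  have hadjxR : ∀ (u : V) i, (Gp n0 G).Adj (xzero V n0 hn0) (GPV.R u i) :=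
    adj_xzero_R n0 hn0 G
  have hadjyL : ∀ (u : V) i, (Gp n0 G).Adj (yzero V n0 hn0) (GPV.L u i) :=
    adj_yzero_L n0 hn0 G
  have hadjyR : ∀ (u : V) i, (Gp n0 G).Adj (yzero V n0 hn0) (GPV.R u i) :=
    adj_yzero_R n0 hn0 G
  have hadjxW : (Gp n0 G).Adj (xzero V n0 hn0) GPV.W := adj_xzero_W n0 hn0 G
  have hadjyW : (Gp n0 G).Adj (yzero V n0 hn0) GPV.W := adj_yzero_W n0 hn0 G
  have hadjxy : (Gp n0 G).Adj (xzero V n0 hn0) (yzero V n0 hn0) := adj_xzero_yzero n0 hn0 G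
  have hnadjxX : ∀ j, ¬ (Gp n0 G).Adj (xzero V n0 hn0) (GPV.X j) := not_adj_xzero_X n0 hn0 G
  have hnadjyY : ∀ j, ¬ (Gp n0 G).Adj (yzero V n0 hn0) (GPV.Y j) := not_adj_yzero_Y n0 hn0 G
  have hxFr : xzero V n0 hn0 ∈ frameSet V n0 :=
    Finset.mem_union_left _ (Finset.mem_image_of_mem _ (Finset.mem_univ _))
  have hyFr : yzero V n0 hn0 ∈ frameSet V n0 :=
    Finset.mem_union_right _ (Finset.mem_image_of_mem _ (Finset.mem_univ _))
  set x := xzero V n0 hn0 with hxdef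
  set y := yzero V n0 hn0 with hydef
  have hτxy : τ x ≠ τ y := by
    rw [hτx, hτy]
    intro h
    exact hxy (neg_inj.mp h)
  -- the set S of frame vertices other than x, y
  set S : Finset (GPV V n0) := frameSet V n0 \ {x, y} with hSdef
  set c : ℕ := S.card with hcdef
  have hsub : ({x, y} : Finset (GPV V n0)) ⊆ frameSet V n0 := by
    intro a ha
    rcases Finset.mem_insert.mp ha with rfl | ha
    · exact hxFr
    · rw [Finset.mem_singleton.mp ha]; exact hyFr
  have hc : (c : ℤ) = 200 * (n0 : ℤ) * n0 - 2 := by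
    have h2 : ({x, y} : Finset (GPV V n0)).card = 2 := Finset.card_pair hxyne
    have h200 : 2 ≤ 200 * n0 * n0 := by nlinarith
    rw [hcdef, hSdef, Finset.card_sdiff_of_subset hsub, frameSet_card, h2, Nat.cast_sub h200]
    push_cast
    ring
  -- claim Z1: pairs away from x, y are unchanged
  have Z1 : ∀ a b : GPV V n0, a ≠ x → a ≠ y → b ≠ x → b ≠ y →
      Fval n0 G σ a b = Fval n0 G τ a b := by
    intro a b ha1 ha2 hb1 hb2
    unfold Fval
    rw [hτ a ha1 ha2, hτ b hb1 hb2]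
  -- claim C: per-vertex bound for b ∉ {x,y}
  have claimC : ∀ b : GPV V n0, b ≠ x → b ≠ y →
      (Fval n0 G σ x b - Fval n0 G τ x b) + (Fval n0 G σ y b - Fval n0 G τ y b)
        ≤ (if b ∈ S then (1:ℤ) else 0) := by
    intro b hbx hby
    have hτb : τ b = σ b := hτ b hbx hby
    have hmemiff : b ∈ S ↔ b ∈ frameSet V n0 := by
      rw [hSdef, Finset.mem_sdiff]
      simp [hbx, hby]
    have common : (Gp n0 G).Adj x b → (Gp n0 G).Adj y b →
        (Fval n0 G σ x b - Fval n0 G τ x b) + (Fval n0 G σ y b - Fval n0 G τ y b)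
          ≤ (if b ∈ S then (1:ℤ) else 0) := by
      intro hax hay
      have e1 : Fval n0 G σ x b + Fval n0 G σ y b = 1 := by
        rw [Fval_of_adj G σ hax, Fval_of_adj G σ hay]
        exact units_key (σ x) (σ y) (σ b) hxy
      have e2 : Fval n0 G τ x b + Fval n0 G τ y b = 1 := by
        rw [Fval_of_adj G τ hax, Fval_of_adj G τ hay]
        exact units_key (τ x) (τ y) (τ b) hτxy
      have hpos : (0:ℤ) ≤ (if b ∈ S then (1:ℤ) else 0) := by split <;> norm_num
      linarith
    cases b with
    | X j =>
      have hmem : GPV.X j ∈ S :=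
        hmemiff.mpr (Finset.mem_union_left _ (Finset.mem_image_of_mem _ (Finset.mem_univ _)))
      rw [if_pos hmem]
      have h1 : Fval n0 G σ x (GPV.X j) = 0 := Fval_of_not_adj G σ (hnadjxX j)
      have h2 : Fval n0 G τ x (GPV.X j) = 0 := Fval_of_not_adj G τ (hnadjxX j)
      have h3 := Fval_le_one G σ y (GPV.X j)
      have h4 := Fval_nonneg G τ y (GPV.X j)
      linarith
    | Y j =>
      have hmem : GPV.Y j ∈ S :=
        hmemiff.mpr (Finset.mem_union_right _ (Finset.mem_image_of_mem _ (Finset.mem_univ _)))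
      rw [if_pos hmem]
      have h1 : Fval n0 G σ y (GPV.Y j) = 0 := Fval_of_not_adj G σ (hnadjyY j)
      have h2 : Fval n0 G τ y (GPV.Y j) = 0 := Fval_of_not_adj G τ (hnadjyY j)
      have h3 := Fval_le_one G σ x (GPV.Y j)
      have h4 := Fval_nonneg G τ x (GPV.Y j)
      linarith
    | L u i => exact common (hadjxL u i) (hadjyL u i)
    | R u i => exact common (hadjxR u i) (hadjyR u i)
    | W => exact common hadjxW hadjyW
  have claimC' : ∀ b : GPV V n0, b ≠ x → b ≠ y →
      (Fval n0 G σ b x - Fval n0 G τ b x) + (Fval n0 G σ b y - Fval n0 G τ b y)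
        ≤ (if b ∈ S then (1:ℤ) else 0) := by
    intro b hbx hby
    rw [Fval_symm G σ b x, Fval_symm G τ b x, Fval_symm G σ b y, Fval_symm G τ b y]
    exact claimC b hbx hby
  -- sum machinery
  set T : Finset (GPV V n0) := Finset.univ \ {x, y} with hTdef
  have memT : ∀ a ∈ T, a ≠ x ∧ a ≠ y := by
    intro a ha
    rw [hTdef, Finset.mem_sdiff, Finset.mem_insert, Finset.mem_singleton] at ha
    exact ⟨fun h => ha.2 (Or.inl h), fun h => ha.2 (Or.inr h)⟩
  have splitSum : ∀ f : GPV V n0 → ℤ,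
      (∑ b, f b) = (∑ b ∈ T, f b) + (f x + f y) := by
    intro f
    rw [hTdef, ← Finset.sum_sdiff (Finset.subset_univ ({x, y} : Finset (GPV V n0))),
      Finset.sum_pair hxyne]
  have expand : ∀ ρ : GPV V n0 → ℤˣ,
      (∑ a, ∑ b, Fval n0 G ρ a b)
        = (∑ a ∈ T, ∑ b ∈ T, Fval n0 G ρ a b)
          + (∑ a ∈ T, (Fval n0 G ρ a x + Fval n0 G ρ a y))
          + ((∑ b ∈ T, Fval n0 G ρ x b) + (∑ b ∈ T, Fval n0 G ρ y b))
          + ((Fval n0 G ρ x x + Fval n0 G ρ x y) + (Fval n0 G ρ y x + Fval n0 G ρ y y)) := by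
    intro ρ
    calc (∑ a, ∑ b, Fval n0 G ρ a b)
        = ∑ a, ((∑ b ∈ T, Fval n0 G ρ a b) + (Fval n0 G ρ a x + Fval n0 G ρ a y)) :=
          Finset.sum_congr rfl fun a _ => splitSum (fun b => Fval n0 G ρ a b)
      _ = (∑ a, ∑ b ∈ T, Fval n0 G ρ a b)
          + ((∑ a, Fval n0 G ρ a x) + (∑ a, Fval n0 G ρ a y)) := by
          rw [Finset.sum_add_distrib, Finset.sum_add_distrib]
      _ = ((∑ a ∈ T, ∑ b ∈ T, Fval n0 G ρ a b)
            + ((∑ b ∈ T, Fval n0 G ρ x b) + (∑ b ∈ T, Fval n0 G ρ y b)))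
          + (((∑ a ∈ T, Fval n0 G ρ a x) + (Fval n0 G ρ x x + Fval n0 G ρ y x))
            + ((∑ a ∈ T, Fval n0 G ρ a y) + (Fval n0 G ρ x y + Fval n0 G ρ y y))) := by
          rw [splitSum (fun a => ∑ b ∈ T, Fval n0 G ρ a b),
            splitSum (fun a => Fval n0 G ρ a x), splitSum (fun a => Fval n0 G ρ a y)]
      _ = _ := by rw [Finset.sum_add_distrib]; ring
  have hTT : (∑ a ∈ T, ∑ b ∈ T, Fval n0 G σ a b) = (∑ a ∈ T, ∑ b ∈ T, Fval n0 G τ a b) :=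
    Finset.sum_congr rfl fun a ha => Finset.sum_congr rfl fun b hb =>
      Z1 a b (memT a ha).1 (memT a ha).2 (memT b hb).1 (memT b hb).2
  -- indicator sum bound
  have hindS : (∑ b ∈ T, (if b ∈ S then (1:ℤ) else 0)) = (c : ℤ) := by
    rw [Finset.sum_boole]
    norm_num
    congr 1
    ext a
    rw [hTdef, hSdef]
    simp only [Finset.mem_filter, Finset.mem_sdiff, Finset.mem_univ, true_and]
    tauto
  have B1 : (∑ a ∈ T, ((Fval n0 G σ a x - Fval n0 G τ a x)
      + (Fval n0 G σ a y - Fval n0 G τ a y))) ≤ (c : ℤ) := by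
    calc (∑ a ∈ T, ((Fval n0 G σ a x - Fval n0 G τ a x)
          + (Fval n0 G σ a y - Fval n0 G τ a y)))
        ≤ (∑ b ∈ T, (if b ∈ S then (1:ℤ) else 0)) :=
          Finset.sum_le_sum fun a ha => claimC' a (memT a ha).1 (memT a ha).2
      _ = (c : ℤ) := hindS
  have B2 : (∑ b ∈ T, ((Fval n0 G σ x b - Fval n0 G τ x b)
      + (Fval n0 G σ y b - Fval n0 G τ y b))) ≤ (c : ℤ) := by
    calc (∑ b ∈ T, ((Fval n0 G σ x b - Fval n0 G τ x b)
          + (Fval n0 G σ y b - Fval n0 G τ y b)))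
        ≤ (∑ b ∈ T, (if b ∈ S then (1:ℤ) else 0)) :=
          Finset.sum_le_sum fun b hb => claimC b (memT b hb).1 (memT b hb).2
      _ = (c : ℤ) := hindS
  have hs1 : (∑ a ∈ T, ((Fval n0 G σ a x - Fval n0 G τ a x)
      + (Fval n0 G σ a y - Fval n0 G τ a y)))
      = (∑ a ∈ T, (Fval n0 G σ a x + Fval n0 G σ a y))
        - (∑ a ∈ T, (Fval n0 G τ a x + Fval n0 G τ a y)) := by
    rw [← Finset.sum_sub_distrib]
    exact Finset.sum_congr rfl fun a _ => by ring
  have hs2 : (∑ b ∈ T, ((Fval n0 G σ x b - Fval n0 G τ x b)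
      + (Fval n0 G σ y b - Fval n0 G τ y b)))
      = ((∑ b ∈ T, Fval n0 G σ x b) + (∑ b ∈ T, Fval n0 G σ y b))
        - ((∑ b ∈ T, Fval n0 G τ x b) + (∑ b ∈ T, Fval n0 G τ y b)) := by
    rw [← Finset.sum_add_distrib, ← Finset.sum_add_distrib, ← Finset.sum_sub_distrib]
    exact Finset.sum_congr rfl fun b _ => by ring
  -- corner terms
  have hxx1 : Fval n0 G σ x x = 0 := Fval_self G σ x
  have hxx2 : Fval n0 G τ x x = 0 := Fval_self G τ x
  have hyy1 : Fval n0 G σ y y = 0 := Fval_self G σ y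
  have hyy2 : Fval n0 G τ y y = 0 := Fval_self G τ y
  have hxy1 : Fval n0 G σ x y = 1 := by
    rw [Fval_of_adj G σ hadjxy, if_pos hxy]
  have hxy2 : Fval n0 G τ x y = 1 := by
    rw [Fval_of_adj G τ hadjxy, if_pos hτxy]
  have hyx1 : Fval n0 G σ y x = 1 := by rw [Fval_symm G σ y x]; exact hxy1
  have hyx2 : Fval n0 G τ y x = 1 := by rw [Fval_symm G τ y x]; exact hxy2
  -- the main inequality on double sums
  have main : (∑ a, ∑ b, Fval n0 G σ a b) - (∑ a, ∑ b, Fval n0 G τ a b)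
      ≤ 2 * (c : ℤ) := by
    have eσ := expand σ
    have eτ := expand τ
    linarith
  -- translate to cutCount
  have hD : ∀ ρ : GPV V n0 → ℤˣ,
      (((Finset.univ.filter (fun pr : GPV V n0 × GPV V n0 =>
        (Gp n0 G).Adj pr.1 pr.2 ∧ ρ pr.1 ≠ ρ pr.2)).card : ℤ))
        = ∑ a, ∑ b, Fval n0 G ρ a b := by
    intro ρ
    rw [Finset.card_filter]
    push_cast
    rw [Fintype.sum_prod_type]
    rfl
  have hnat : (Finset.univ.filter (fun pr : GPV V n0 × GPV V n0 =>
      (Gp n0 G).Adj pr.1 pr.2 ∧ σ pr.1 ≠ σ pr.2)).card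
      ≤ (Finset.univ.filter (fun pr : GPV V n0 × GPV V n0 =>
      (Gp n0 G).Adj pr.1 pr.2 ∧ τ pr.1 ≠ τ pr.2)).card + 2 * c := by
    have hZ : ((Finset.univ.filter (fun pr : GPV V n0 × GPV V n0 =>
        (Gp n0 G).Adj pr.1 pr.2 ∧ σ pr.1 ≠ σ pr.2)).card : ℤ)
        ≤ ((Finset.univ.filter (fun pr : GPV V n0 × GPV V n0 =>
        (Gp n0 G).Adj pr.1 pr.2 ∧ τ pr.1 ≠ τ pr.2)).card : ℤ) + 2 * (c : ℤ) := by
      rw [hD σ, hD τ]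
      linarith
    exact_mod_cast hZ
  have hdiv : (Finset.univ.filter (fun pr : GPV V n0 × GPV V n0 =>
      (Gp n0 G).Adj pr.1 pr.2 ∧ σ pr.1 ≠ σ pr.2)).card / 2
      ≤ (Finset.univ.filter (fun pr : GPV V n0 × GPV V n0 =>
      (Gp n0 G).Adj pr.1 pr.2 ∧ τ pr.1 ≠ τ pr.2)).card / 2 + c := by
    omega
  have hsq : (n0 : ℤ) ^ 2 = (n0 : ℤ) * n0 := sq (n0 : ℤ)
  unfold cutCount
  have hcast : (((Finset.univ.filter (fun pr : GPV V n0 × GPV V n0 =>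
      (Gp n0 G).Adj pr.1 pr.2 ∧ σ pr.1 ≠ σ pr.2)).card / 2 : ℕ) : ℤ)
      ≤ (((Finset.univ.filter (fun pr : GPV V n0 × GPV V n0 =>
      (Gp n0 G).Adj pr.1 pr.2 ∧ τ pr.1 ≠ τ pr.2)).card / 2 : ℕ) : ℤ) + (c : ℤ) := by
    exact_mod_cast hdiv
  linarith

end QAOA
end
end
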